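/- For each d-dimensional cube C in ℝ^n with 1 ≤ d ≤ n, the following three collections all equal ∂K_d(C): {H ∩ ∂_∘C : H ∈ K°_d(C), H ∩ ∂_∘C ≠ ∅}; {H ∩ F : H ∈ K°_d(C), F a facet of C, H ∩ F ≠ ∅}; and {H ∩ f : H ∈ K°_d(C), f a proper face of C, H ∩ f ≠ ∅}. -/

import Mathlib

open Set Function

noncomputable section

abbrev E (n : ℕ) := EuclideanSpace ℝ (Fin n)

/-- `I^d × {0}^{n-d}` inside `ℝ^n`. -/
def IcubeD (n d : ℕ) : Set (E n) :=
  {x | (∀ i : Fin n, (i : ℕ) < d → x i ∈ Icc (-1 : ℝ) 1) ∧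
       ∀ i : Fin n, d ≤ (i : ℕ) → x i = 0}

/-- The cube `I^n = [-1,1]^n`. -/
def Icube (n : ℕ) : Set (E n) := IcubeD n n

/-- `H^d_{ij}(a,b) = {x ∈ I^d × {0}^{n-d} : a·x_i ≥ b·x_j}`. -/
def HsetD (n d : ℕ) (i j : Fin n) (a b : ℝ) : Set (E n) :=
  {x ∈ IcubeD n d | b * x j ≤ a * x i}

def Hset (n : ℕ) (i j : Fin n) (a b : ℝ) : Set (E n) := HsetD n n i j a b

/-- The family `ℋ^d` of the sets `H^d_{ij}(a,b)`, `a, b ∈ {-1,1}`. -/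
def HfamD (n d : ℕ) : Set (Set (E n)) :=
  {H | ∃ i j : Fin n, (i : ℕ) < d ∧ (j : ℕ) < d ∧
      ∃ a b : ℝ, (a = 1 ∨ a = -1) ∧ (b = 1 ∨ b = -1) ∧ H = HsetD n d i j a b}

def Hfam (n : ℕ) : Set (Set (E n)) := HfamD n n

/-- Fundamental subsets of `ℋ^d`. -/
def IsFundSubsetD (n d : ℕ) (S : Set (Set (E n))) : Prop :=
  S ⊆ HfamD n d ∧
  ∀ i j : Fin n, (i : ℕ) < d → (j : ℕ) < d → i ≤ j →
    (HsetD n d i j 1 (-1) ∈ S ∨ HsetD n d i j (-1) 1 ∈ S) ∧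
    (HsetD n d i j 1 1 ∈ S ∨ HsetD n d i j (-1) (-1) ∈ S)

def IsFundSubset (n : ℕ) (S : Set (Set (E n))) : Prop := IsFundSubsetD n n S

/-- `K°_d` (realized inside `ℝ^n` on the slice `I^d × {0}^{n-d}`). -/
def KoD (n d : ℕ) : Set (Set (E n)) :=
  {K | ∃ S, IsFundSubsetD n d S ∧ K = ⋂₀ S}

/-- `K°_n`. -/
def Ko (n : ℕ) : Set (Set (E n)) := KoD n n

/-- Symmetries of the cube `I^n`. -/
def SymI (n : ℕ) (γ : E n → E n) : Prop :=
  Isometry γ ∧ Surjective γ ∧ γ '' Icube n = Icube n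

/-- Conformal affine maps `x ↦ λ U x + v`, `λ > 0`, `U ∈ O(n)`. -/
def ConfAffine (n : ℕ) (L : E n → E n) : Prop :=
  ∃ (c : ℝ) (U : E n ≃ₗᵢ[ℝ] E n) (v : E n), 0 < c ∧ ∀ x, L x = c • U x + v

/-- `d`-dimensional cubes in `ℝ^n` (for `d ≥ 1`). -/
def IsCube (n d : ℕ) (C : Set (E n)) : Prop :=
  ∃ L : E n → E n, ConfAffine n L ∧ L '' C = IcubeD n d

/-- `K°_d(C)` for a `d`-dimensional cube `C` (with `K°_0(C) = {C}`). -/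
def KoCube (n d : ℕ) (C : Set (E n)) : Set (Set (E n)) :=
  {K | (d = 0 ∧ K = C) ∨
       (1 ≤ d ∧ ∃ L : E n → E n, ConfAffine n L ∧ L '' C = IcubeD n d ∧
          ∃ H ∈ KoD n d, K = L ⁻¹' H)}

/-- Faces of `I^d × {0}^{n-d}` of dimension `e`. -/
def IsFaceD (n d : ℕ) (f : Set (E n)) (e : ℕ) : Prop :=
  ∃ J : Fin n → Set ℝ,
    (∀ i : Fin n, (i : ℕ) < d → (J i = Icc (-1 : ℝ) 1 ∨ J i = {-1} ∨ J i = {1})) ∧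
    (∀ i : Fin n, d ≤ (i : ℕ) → J i = {0}) ∧
    {i : Fin n | J i = Icc (-1 : ℝ) 1}.ncard = e ∧
    f = {x : E n | ∀ i, x i ∈ J i}

/-- `c` is a face of dimension `e` of the `d`-dimensional cube `C`. -/
def FaceOfCubeDim (n d : ℕ) (C c : Set (E n)) (e : ℕ) : Prop :=
  ∃ L : E n → E n, ConfAffine n L ∧ L '' C = IcubeD n d ∧
    ∃ f, IsFaceD n d f e ∧ c = L ⁻¹' f

/-- The symmetric decomposition `K_d(C)` of a `d`-dimensional cube `C`. -/
def KcalCube (n d : ℕ) (C : Set (E n)) : Set (Set (E n)) :=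
  {K | ∃ c e, FaceOfCubeDim n d C c e ∧ K ∈ KoCube n e c}

/-- `∂K_d(C)`: union of the `K°` of the proper faces of `C`. -/
def KcalBdCube (n d : ℕ) (C : Set (E n)) : Set (Set (E n)) :=
  {K | ∃ c e, FaceOfCubeDim n d C c e ∧ e < d ∧ K ∈ KoCube n e c}

/-- The symmetric decomposition `K_n` of `I^n`. -/
def Kcal (n : ℕ) : Set (Set (E n)) :=
  {K | ∃ c e, IsFaceD n n c e ∧ K ∈ KoCube n e c}

/-- `∂K_n`: union of the `K°` of the proper faces of `I^n`. -/
def KcalBdI (n : ℕ) : Set (Set (E n)) :=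
  {K | ∃ c e, IsFaceD n n c e ∧ e < n ∧ K ∈ KoCube n e c}

/-- `∂_∘ C`: the union of the proper faces of the `d`-cube `C`. -/
def cellBd (n d : ℕ) (C : Set (E n)) : Set (E n) :=
  ⋃₀ {c | ∃ e, e < d ∧ FaceOfCubeDim n d C c e}

/-- The cone `Cone(x, Y) = {x + t (y - x) : y ∈ Y, t ∈ [0,1]}`. -/
def Cone (n : ℕ) (x : E n) (Y : Set (E n)) : Set (E n) :=
  {z | ∃ y ∈ Y, ∃ t : ℝ, t ∈ Icc (0 : ℝ) 1 ∧ z = x + t • (y - x)}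

/-- Standard orthotopes `∏ [-a_i, a_i]`. -/
def StdOrtho (n : ℕ) (a : Fin n → ℝ) : Set (E n) :=
  {x | ∀ i, x i ∈ Icc (-(a i)) (a i)}

/-- `n`-dimensional orthotopes in `ℝ^n`. -/
def IsOrtho (n : ℕ) (R : Set (E n)) : Prop :=
  ∃ (L : E n → E n) (a : Fin n → ℝ), Isometry L ∧ Surjective L ∧
    (∀ i, 0 < a i) ∧ L '' R = StdOrtho n a

/-- The cubic-stretching of the standard orthotope `∏ [-a_i, a_i]`. -/
def stretch (n : ℕ) (a : Fin n → ℝ) : E n → E n :=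
  fun x => WithLp.toLp 2 (fun i => x i / a i)

/-- `K_n(R)` for an `n`-dimensional orthotope `R`. -/
def KcalOrtho (n : ℕ) (R : Set (E n)) : Set (Set (E n)) :=
  {K | ∃ (L : E n → E n) (a : Fin n → ℝ), Isometry L ∧ Surjective L ∧
      (∀ i, 0 < a i) ∧ L '' R = StdOrtho n a ∧
      ∃ H ∈ Kcal n, K = L ⁻¹' (stretch n a ⁻¹' H)}

/-- Faces of an `n`-dimensional orthotope `R`. -/
def FaceOfOrtho (n : ℕ) (R c : Set (E n)) : Prop :=
  ∃ (L : E n → E n) (a : Fin n → ℝ), Isometry L ∧ Surjective L ∧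
    (∀ i, 0 < a i) ∧ L '' R = StdOrtho n a ∧
    ∃ f e, IsFaceD n n f e ∧ c = L ⁻¹' (stretch n a ⁻¹' f)

/-- The center `x_α` of the subcube `C_α`. -/
def xalpha (n l : ℕ) (α : Fin n → ℕ) : E n :=
  WithLp.toLp 2 (fun i => (2 * (α i : ℝ) + 1 - (l : ℝ)) / (l : ℝ))

/-- `T_α(x) = l (x - x_α)`, mapping `C_α` onto `I^n`. -/
def Talpha (n l : ℕ) (α : Fin n → ℕ) : E n → E n :=
  fun x => (l : ℝ) • (x - xalpha n l α)

/-- The refined symmetric decomposition `K_{n,l}`. -/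
def Knl (n l : ℕ) : Set (Set (E n)) :=
  {K | ∃ α : Fin n → ℕ, (∀ i, α i < l) ∧ ∃ H ∈ Kcal n, K = Talpha n l α ⁻¹' H}

/-- `Γ` is a group of surjective isometries of `ℝ^n`. -/
def IsIsomGroup (n : ℕ) (Γ : Set (E n → E n)) : Prop :=
  (∀ γ ∈ Γ, Isometry γ ∧ Surjective γ) ∧ id ∈ Γ ∧
  (∀ γ ∈ Γ, ∀ γ' ∈ Γ, γ ∘ γ' ∈ Γ) ∧
  ∀ γ ∈ Γ, ∃ γ' ∈ Γ, γ ∘ γ' = id ∧ γ' ∘ γ = id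

/-- `D` is a fundamental domain of `Γ`. -/
def IsFundDom (n : ℕ) (Γ : Set (E n → E n)) (D : Set (E n)) : Prop :=
  (∃ U : Set (E n), U.Nonempty ∧ IsOpen U ∧ IsConnected U ∧ D = closure U) ∧
  (⋃ γ ∈ Γ, γ '' D) = univ ∧
  (∀ x : E n, ∃ V : Set (E n), x ∈ V ∧ IsOpen V ∧
    {γ ∈ Γ | ((γ '' D) ∩ V).Nonempty}.Finite) ∧
  ∀ γ ∈ Γ, γ ≠ id → interior D ∩ interior (γ '' D) = ∅

/-! ### Basic lemmas -/

lemma mem_IcubeD {n d : ℕ} {x : E n} :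
    x ∈ IcubeD n d ↔ (∀ i : Fin n, (i : ℕ) < d → x i ∈ Icc (-1 : ℝ) 1) ∧
      ∀ i : Fin n, d ≤ (i : ℕ) → x i = 0 := Iff.rfl

lemma mem_HsetD {n d : ℕ} {i j : Fin n} {a b : ℝ} {x : E n} :
    x ∈ HsetD n d i j a b ↔ x ∈ IcubeD n d ∧ b * x j ≤ a * x i := Iff.rfl

lemma hset_swap (n d : ℕ) (i j : Fin n) (a b : ℝ) :
    HsetD n d i j a b = HsetD n d j i (-b) (-a) := by
  ext x; simp only [mem_HsetD]; constructor <;> rintro ⟨h1, h2⟩ <;> exact ⟨h1, by linarith⟩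

lemma zero_mem_IcubeD {n d : ℕ} : (0 : E n) ∈ IcubeD n d := by
  constructor <;> intro i _ <;> simp

lemma zero_mem_HsetD {n d : ℕ} {i j : Fin n} {a b : ℝ} : (0 : E n) ∈ HsetD n d i j a b := by
  refine ⟨zero_mem_IcubeD, ?_⟩; simp

lemma hsetD_subset_IcubeD {n d : ℕ} {i j : Fin n} {a b : ℝ} :
    HsetD n d i j a b ⊆ IcubeD n d := fun x hx => hx.1

lemma pm_mul {a b : ℝ} (ha : a = 1 ∨ a = -1) (hb : b = 1 ∨ b = -1) :
    a * b = 1 ∨ a * b = -1 := by rcases ha with h|h <;> rcases hb with h'|h' <;> simp [h, h']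

lemma pm_cases_neg {a b : ℝ} (ha : a = 1 ∨ a = -1) (hb : b = 1 ∨ b = -1) (h : a * b = -1) :
    (a = 1 ∧ b = -1) ∨ (a = -1 ∧ b = 1) := by
  rcases ha with h1|h1 <;> rcases hb with h2|h2 <;> simp [h1, h2] at h ⊢ <;> norm_num at h

lemma pm_cases_pos {a b : ℝ} (ha : a = 1 ∨ a = -1) (hb : b = 1 ∨ b = -1) (h : a * b = 1) :
    (a = 1 ∧ b = 1) ∨ (a = -1 ∧ b = -1) := by
  rcases ha with h1|h1 <;> rcases hb with h2|h2 <;> simp [h1, h2] at h ⊢ <;> norm_num at h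

/-- Constraint selection: for any ordered pair and sign class, a fundamental subset
contains a constraint of that class. -/
lemma CLS {n d : ℕ} {S : Set (Set (E n))} (hS : IsFundSubsetD n d S)
    {i j : Fin n} (hi : (i : ℕ) < d) (hj : (j : ℕ) < d) {δ : ℝ} (hδ : δ = 1 ∨ δ = -1) :
    ∃ a b : ℝ, (a = 1 ∨ a = -1) ∧ (b = 1 ∨ b = -1) ∧ a * b = δ ∧
      HsetD n d i j a b ∈ S := by
  rcases le_total i j with hij | hij
  · obtain ⟨h1, h2⟩ := hS.2 i j hi hj hij
    rcases hδ with rfl | rfl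
    · rcases h2 with h | h
      · exact ⟨1, 1, Or.inl rfl, Or.inl rfl, by norm_num, h⟩
      · exact ⟨-1, -1, Or.inr rfl, Or.inr rfl, by norm_num, h⟩
    · rcases h1 with h | h
      · exact ⟨1, -1, Or.inl rfl, Or.inr rfl, by norm_num, h⟩
      · exact ⟨-1, 1, Or.inr rfl, Or.inl rfl, by norm_num, h⟩
  · obtain ⟨h1, h2⟩ := hS.2 j i hj hi hij
    have e1 : HsetD n d j i 1 1 = HsetD n d i j (-1) (-1) := by
      rw [hset_swap n d j i 1 1]
    have e2 : HsetD n d j i (-1) (-1) = HsetD n d i j 1 1 := by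
      rw [hset_swap n d j i (-1) (-1)]; norm_num
    have e3 : HsetD n d j i 1 (-1) = HsetD n d i j 1 (-1) := by
      rw [hset_swap n d j i 1 (-1)]; norm_num
    have e4 : HsetD n d j i (-1) 1 = HsetD n d i j (-1) 1 := by
      rw [hset_swap n d j i (-1) 1]; norm_num
    rcases hδ with rfl | rfl
    · rcases h2 with h | h
      · exact ⟨-1, -1, Or.inr rfl, Or.inr rfl, by norm_num, e1 ▸ h⟩
      · exact ⟨1, 1, Or.inl rfl, Or.inl rfl, by norm_num, e2 ▸ h⟩
    · rcases h1 with h | h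
      · exact ⟨1, -1, Or.inl rfl, Or.inr rfl, by norm_num, e3 ▸ h⟩
      · exact ⟨-1, 1, Or.inr rfl, Or.inl rfl, by norm_num, e4 ▸ h⟩

lemma fund_nonempty {n d : ℕ} {S : Set (Set (E n))} (hS : IsFundSubsetD n d S)
    (hd : 1 ≤ d) (hdn : d ≤ n) : S.Nonempty := by
  have hn : 0 < n := lt_of_lt_of_le hd hdn
  obtain ⟨a, b, _, _, _, hmem⟩ :=
    CLS hS (i := ⟨0, hn⟩) (j := ⟨0, hn⟩) hd hd (Or.inl rfl)
  exact ⟨_, hmem⟩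

lemma sInter_subset_IcubeD {n d : ℕ} {S : Set (Set (E n))} (hS : IsFundSubsetD n d S)
    (hd : 1 ≤ d) (hdn : d ≤ n) : ⋂₀ S ⊆ IcubeD n d := by
  obtain ⟨T, hT⟩ := fund_nonempty hS hd hdn
  obtain ⟨i, j, _, _, a, b, _, _, rfl⟩ := hS.1 hT
  exact fun x hx => hsetD_subset_IcubeD (hx _ hT)

lemma KoD_subset_IcubeD {n d : ℕ} {K : Set (E n)} (hK : K ∈ KoD n d)
    (hd : 1 ≤ d) (hdn : d ≤ n) : K ⊆ IcubeD n d := by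
  obtain ⟨S, hS, rfl⟩ := hK; exact sInter_subset_IcubeD hS hd hdn

lemma zero_mem_KoD {n d : ℕ} {K : Set (E n)} (hK : K ∈ KoD n d) : (0 : E n) ∈ K := by
  obtain ⟨S, hS, rfl⟩ := hK
  intro T hT
  obtain ⟨i, j, _, _, a, b, _, _, rfl⟩ := hS.1 hT
  exact zero_mem_HsetD
/-! ### Conformal affine maps -/

lemma ConfAffine.bijective {n : ℕ} {L : E n → E n} (hL : ConfAffine n L) :
    Bijective L := by
  obtain ⟨c, U, v, hc, hLx⟩ := hL
  constructor
  · intro x y hxy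
    rw [hLx, hLx] at hxy
    have h2 : c • U x = c • U y := by
      have := add_right_cancel hxy; exact this
    have h3 : U x = U y := smul_right_injective _ (ne_of_gt hc) h2
    exact U.injective h3
  · intro y
    refine ⟨U.symm (c⁻¹ • (y - v)), ?_⟩
    rw [hLx]
    simp [smul_smul, mul_inv_cancel₀ (ne_of_gt hc)]

lemma ConfAffine.comp {n : ℕ} {L M : E n → E n} (hL : ConfAffine n L)
    (hM : ConfAffine n M) : ConfAffine n (L ∘ M) := by
  obtain ⟨c, U, v, hc, hLx⟩ := hL
  obtain ⟨c', U', v', hc', hMx⟩ := hM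
  refine ⟨c * c', U'.trans U, c • U v' + v, mul_pos hc hc', fun x => ?_⟩
  simp only [comp_apply, hLx, hMx]
  simp [smul_add, smul_smul, add_assoc]

lemma ConfAffine.exists_inv {n : ℕ} {L : E n → E n} (hL : ConfAffine n L) :
    ∃ L' : E n → E n, ConfAffine n L' ∧ (∀ x, L' (L x) = x) ∧ ∀ x, L (L' x) = x := by
  obtain ⟨c, U, v, hc, hLx⟩ := hL
  refine ⟨fun y => c⁻¹ • U.symm (y - v), ⟨c⁻¹, U.symm, -(c⁻¹ • U.symm v),
    inv_pos.2 hc, fun x => by simp [sub_eq_add_neg, smul_add]⟩, fun x => ?_, fun y => ?_⟩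
  · rw [hLx]; simp [smul_smul, inv_mul_cancel₀ (ne_of_gt hc)]
  · rw [hLx]; simp [smul_smul, mul_inv_cancel₀ (ne_of_gt hc)]
/-! ### Euclidean helpers -/

lemma normsq_eq {n : ℕ} (x : E n) : ‖x‖ ^ 2 = ∑ i, (x i) ^ 2 := by
  rw [EuclideanSpace.norm_eq, Real.sq_sqrt (by positivity)]
  exact Finset.sum_congr rfl fun i _ => by rw [Real.norm_eq_abs, sq_abs]

lemma abs_coord_le_norm {n : ℕ} (x : E n) (i : Fin n) : |x i| ≤ ‖x‖ := by
  have h1 : (x i) ^ 2 ≤ ‖x‖ ^ 2 := by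
    rw [normsq_eq]
    exact Finset.single_le_sum (f := fun j => (x j) ^ 2)
      (fun j _ => sq_nonneg _) (Finset.mem_univ i)
  calc |x i| = Real.sqrt ((x i) ^ 2) := (Real.sqrt_sq_eq_abs _).symm
    _ ≤ Real.sqrt (‖x‖ ^ 2) := Real.sqrt_le_sqrt h1
    _ = ‖x‖ := by rw [Real.sqrt_sq (norm_nonneg _)]

lemma card_filter_lt {n : ℕ} (d : ℕ) (hdn : d ≤ n) :
    (Finset.filter (fun i : Fin n => (i : ℕ) < d) Finset.univ).card = d := by
  have h : Finset.filter (fun i : Fin n => (i : ℕ) < d) Finset.univ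
      = Finset.map (Fin.castLEEmb hdn) Finset.univ := by
    ext i
    rw [Finset.mem_filter, Finset.mem_map]
    constructor
    · rintro ⟨-, hi⟩
      exact ⟨⟨(i : ℕ), hi⟩, Finset.mem_univ _, by ext; simp⟩
    · rintro ⟨j, -, rfl⟩
      exact ⟨Finset.mem_univ _, by simpa using j.isLt⟩
  rw [h, Finset.card_map, Finset.card_univ, Fintype.card_fin]

lemma ncard_setOf_lt {n : ℕ} (d : ℕ) (hdn : d ≤ n) :
    ({i : Fin n | (i : ℕ) < d}).ncard = d := by
  have h : {i : Fin n | (i : ℕ) < d} = ↑(Finset.filter (fun i : Fin n => (i : ℕ) < d)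
      Finset.univ) := by ext i; simp
  rw [h, Set.ncard_coe_finset, card_filter_lt d hdn]

lemma normsq_le_of_mem {n d : ℕ} {x : E n} (hx : x ∈ IcubeD n d) (hdn : d ≤ n) :
    ‖x‖ ^ 2 ≤ d := by
  rw [normsq_eq]
  have hb : ∀ i : Fin n, (x i) ^ 2 ≤ (if (i : ℕ) < d then (1:ℝ) else 0) := by
    intro i
    by_cases h : (i : ℕ) < d
    · simp only [h, if_true]
      obtain ⟨h1, h2⟩ := hx.1 i h
      nlinarith
    · simp only [h, if_false, hx.2 i (le_of_not_gt h)]; norm_num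
  calc ∑ i : Fin n, (x i) ^ 2
      ≤ ∑ i : Fin n, (if (i : ℕ) < d then (1:ℝ) else 0) := Finset.sum_le_sum fun i _ => hb i
    _ = d := by rw [Finset.sum_boole]; simp [card_filter_lt d hdn]

/-- The all-ones (in the first `d` coordinates) vector. -/
def uvec (n d : ℕ) : E n := WithLp.toLp 2 (fun i => if (i : ℕ) < d then 1 else 0)

lemma uvec_mem {n d : ℕ} : uvec n d ∈ IcubeD n d := by
  constructor
  · intro i hi; simp [uvec, hi]
  · intro i hi; simp [uvec, Nat.not_lt.2 hi]

lemma normsq_uvec {n d : ℕ} (hdn : d ≤ n) : ‖uvec n d‖ ^ 2 = d := by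
  rw [normsq_eq]
  have h : ∀ i : Fin n, (uvec n d i) ^ 2 = (if (i : ℕ) < d then (1:ℝ) else 0) := by
    intro i; by_cases h : (i : ℕ) < d <;> simp [uvec, h]
  rw [Finset.sum_congr rfl fun i _ => h i, Finset.sum_boole]
  simp [card_filter_lt d hdn]

lemma IcubeD_neg_mem {n d : ℕ} {x : E n} (hx : x ∈ IcubeD n d) : -x ∈ IcubeD n d := by
  constructor
  · intro i hi
    obtain ⟨h1, h2⟩ := hx.1 i hi
    have : (-x) i = -(x i) := rfl
    rw [this]; constructor <;> linarith
  · intro i hi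
    have : (-x) i = -(x i) := rfl
    rw [this, hx.2 i hi, neg_zero]

/-- Classification of linear isometries preserving the cube slice, on basis vectors. -/
lemma basis_classify {n d : ℕ} (hdn : d ≤ n) {V : E n ≃ₗᵢ[ℝ] E n}
    (hV : ∀ x ∈ IcubeD n d, V x ∈ IcubeD n d)
    (hVs : ∀ y ∈ IcubeD n d, V.symm y ∈ IcubeD n d)
    (i : Fin n) (hi : (i : ℕ) < d) :
    ∃ (j : Fin n) (s : ℝ), (j : ℕ) < d ∧ (s = 1 ∨ s = -1) ∧
      ∀ k, V (EuclideanSpace.single i 1) k = if k = j then s else 0 := by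
  set Ei : E n := EuclideanSpace.single i 1 with hEi
  have hEim : Ei ∈ IcubeD n d := by
    constructor
    · intro k _; rw [hEi, EuclideanSpace.single_apply]
      by_cases h : k = i <;> simp [h] <;> norm_num
    · intro k hk; rw [hEi, EuclideanSpace.single_apply]
      have : k ≠ i := by rintro rfl; omega
      simp [this]
  set w : E n := V Ei with hw
  have hwm : w ∈ IcubeD n d := hV _ hEim
  have hwabs : ∀ j, |w j| ≤ 1 := by
    intro j
    by_cases h : (j : ℕ) < d
    · obtain ⟨h1, h2⟩ := hwm.1 j h; exact abs_le.2 ⟨h1, h2⟩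
    · rw [hwm.2 j (le_of_not_gt h)]; norm_num
  -- the sign test vector
  set y : E n := WithLp.toLp 2 (fun j => if (j : ℕ) < d then (if w j < 0 then (-1 : ℝ) else 1) else 0) with hy
  have hym : y ∈ IcubeD n d := by
    constructor
    · intro j hj; simp only [hy, hj, if_true]
      by_cases h : w j < 0 <;> simp [h] <;> norm_num
    · intro j hj; simp [hy, Nat.not_lt.2 hj]
  have hVsy : V.symm y ∈ IcubeD n d := hVs _ hym
  have habs1 : (V.symm y) i ≤ 1 := (hVsy.1 i hi).2
  have hinner : ∑ j, w j * y j = (V.symm y) i := by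
    have h1 : (inner ℝ (Ei : E n) (V.symm y) : ℝ) = (V.symm y) i := by
      rw [PiLp.inner_apply]
      rw [Finset.sum_eq_single i]
      · simp [hEi, EuclideanSpace.single_apply, RCLike.inner_apply]
      · intro b _ hb; simp [hEi, EuclideanSpace.single_apply, hb, RCLike.inner_apply]
      · intro h; exact absurd (Finset.mem_univ i) h
    have h2 : (inner ℝ (Ei : E n) (V.symm y) : ℝ) = (inner ℝ w y : ℝ) := by
      rw [← V.inner_map_map Ei (V.symm y), V.apply_symm_apply]
    have h3 : (inner ℝ w y : ℝ) = ∑ j, w j * y j := by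
      rw [PiLp.inner_apply]; exact Finset.sum_congr rfl fun j _ => by
        simp [RCLike.inner_apply, mul_comm]
    rw [← h3, ← h2, h1]
  have hwy : ∀ j, w j * y j = |w j| := by
    intro j
    by_cases h : (j : ℕ) < d
    · simp only [hy, h, if_true]
      by_cases hs : w j < 0
      · simp [hs, abs_of_neg hs]
      · simp [hs, abs_of_nonneg (le_of_not_gt hs)]
    · rw [hwm.2 j (le_of_not_gt h)]; simp
  have hsum_le : ∑ j, |w j| ≤ 1 := by
    rw [← Finset.sum_congr rfl fun j _ => hwy j, hinner]; exact habs1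
  have hnw : ∑ j, (w j) ^ 2 = 1 := by
    have : ‖w‖ = ‖Ei‖ := V.norm_map Ei
    have h1 : ‖Ei‖ = 1 := by rw [hEi, EuclideanSpace.norm_single]; norm_num
    rw [← normsq_eq, this, h1]; norm_num
  have hsqle : ∀ j, (w j) ^ 2 ≤ |w j| := by
    intro j
    have := hwabs j
    nlinarith [abs_nonneg (w j), sq_abs (w j)]
  have hsum_eq : ∑ j, |w j| = 1 := by
    have h1 : (1 : ℝ) ≤ ∑ j, |w j| := by
      rw [← hnw]; exact Finset.sum_le_sum fun j _ => hsqle j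
    linarith
  have hzero : ∀ j, |w j| - (w j) ^ 2 = 0 := by
    have hsum0 : ∑ j, (|w j| - (w j) ^ 2) = 0 := by
      rw [Finset.sum_sub_distrib, hsum_eq, hnw]; ring
    intro j
    have := (Finset.sum_eq_zero_iff_of_nonneg
      (fun k _ => by linarith [hsqle k])).1 hsum0 j (Finset.mem_univ j)
    exact this
  have h01 : ∀ j, |w j| = 0 ∨ |w j| = 1 := by
    intro j
    have h := hzero j
    have : |w j| * (1 - |w j|) = 0 := by
      have hs : (w j) ^ 2 = |w j| ^ 2 := (sq_abs _).symm
      nlinarith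
    rcases mul_eq_zero.1 this with h | h
    · exact Or.inl h
    · right; linarith
  have hex : ∃ j₀, |w j₀| = 1 := by
    by_contra hcon
    push_neg at hcon
    have : ∀ j ∈ Finset.univ, |w j| = 0 := fun j _ => (h01 j).resolve_right (hcon j)
    rw [Finset.sum_congr rfl this] at hsum_eq
    simp at hsum_eq
  obtain ⟨j₀, hj₀⟩ := hex
  have huniq : ∀ j, j ≠ j₀ → w j = 0 := by
    intro j hj
    have hsplit : |w j₀| + ∑ k ∈ Finset.univ.erase j₀, |w k| = ∑ k, |w k| :=
      Finset.add_sum_erase Finset.univ (fun k => |w k|) (Finset.mem_univ j₀)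
    have h0 : ∑ k ∈ Finset.univ.erase j₀, |w k| = 0 := by
      rw [hsum_eq] at hsplit; linarith [hj₀ ▸ hsplit]
    have := (Finset.sum_eq_zero_iff_of_nonneg
      (fun k _ => abs_nonneg (w k))).1 h0 j (Finset.mem_erase.2 ⟨hj, Finset.mem_univ j⟩)
    exact abs_eq_zero.1 this
  have hj₀d : (j₀ : ℕ) < d := by
    by_contra h
    rw [hwm.2 j₀ (le_of_not_gt h)] at hj₀; simp at hj₀
  refine ⟨j₀, w j₀, hj₀d, ?_, ?_⟩
  · rcases (abs_eq (by norm_num : (0:ℝ) ≤ 1)).1 hj₀ with h | h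
    · exact Or.inl h
    · exact Or.inr h
  · intro k
    by_cases h : k = j₀
    · subst h; simp
    · simp [h, huniq k h]
/-! ### Symmetries of the cube slice are signed permutations -/

/-- Data of a signed permutation description of a symmetry. -/
def SPdata (n d : ℕ) (g : E n → E n) (ρ : Equiv.Perm (Fin n)) (η : Fin n → ℝ) : Prop :=
  (∀ k, η k = 1 ∨ η k = -1) ∧
  (∀ k : Fin n, ((k : ℕ) < d ↔ ((ρ k : Fin n) : ℕ) < d)) ∧
  (∀ x : E n, (∀ i : Fin n, d ≤ (i : ℕ) → x i = 0) → ∀ k, g x k = η k * x (ρ k))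

lemma sym_classify {n d : ℕ} (hd : 1 ≤ d) (hdn : d ≤ n) {g : E n → E n}
    (hg : ConfAffine n g) (hgX : g '' IcubeD n d = IcubeD n d) :
    ∃ (ρ : Equiv.Perm (Fin n)) (η : Fin n → ℝ), SPdata n d g ρ η := by
  obtain ⟨c, U, v, hc, hgx⟩ := hg
  have hfwd : ∀ x ∈ IcubeD n d, c • U x + v ∈ IcubeD n d := by
    intro x hx
    have : g x ∈ IcubeD n d := hgX ▸ ⟨x, hx, rfl⟩
    rwa [hgx] at this
  have hbwd : ∀ y ∈ IcubeD n d, ∃ x ∈ IcubeD n d, c • U x + v = y := by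
    intro y hy
    rw [← hgX] at hy
    obtain ⟨x, hx, hxy⟩ := hy
    exact ⟨x, hx, by rw [← hgx, hxy]⟩
  -- Step 1 : v = 0
  have hplus : ∀ x ∈ IcubeD n d, x + (2:ℝ) • v ∈ IcubeD n d := by
    intro x hx
    obtain ⟨x₁, hx₁, hux₁⟩ := hbwd (-x) (IcubeD_neg_mem hx)
    have h2 : c • U (-x₁) + v = x + (2:ℝ) • v := by
      have h3 : c • U x₁ = -x - v := by
        rw [eq_sub_iff_add_eq]; exact hux₁
      rw [map_neg, smul_neg, h3]
      rw [neg_sub', sub_neg_eq_add, neg_neg, two_smul]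
      abel
    have := hfwd (-x₁) (IcubeD_neg_mem hx₁)
    rwa [h2] at this
  have hv : v = 0 := by
    by_contra hv0
    obtain ⟨i, hvi⟩ : ∃ i, v i ≠ 0 := by
      by_contra hall; push_neg at hall
      exact hv0 (by ext i; exact hall i)
    have hk : ∀ k : ℕ, ((2 * k : ℝ)) • v ∈ IcubeD n d := by
      intro k; induction k with
      | zero => simpa using zero_mem_IcubeD
      | succ m ih =>
          have h1 := hplus _ ih
          have heq : ((2 * ((m : ℝ) + 1)) • v : E n) = (2 * (m:ℝ)) • v + (2:ℝ) • v := by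
            rw [← add_smul]; ring_nf
          have h2 : ((2 * ((m+1 : ℕ) : ℝ)) • v : E n) = (2 * ((m : ℝ) + 1)) • v := by
            push_cast; ring_nf
          rw [h2, heq]; exact h1
    rcases lt_or_ge (i : ℕ) d with hid | hid
    · obtain ⟨k, hk'⟩ := exists_nat_gt (1 / |v i|)
      have hmem := hk k
      have hb := hmem.1 i hid
      have hco : ((2 * (k:ℝ)) • v) i = (2 * (k:ℝ)) * v i := rfl
      rw [hco] at hb
      have habs : |(2 * (k:ℝ)) * v i| ≤ 1 := abs_le.2 ⟨hb.1, hb.2⟩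
      have h1 : (1:ℝ) < k * |v i| := by
        rw [div_lt_iff₀ (abs_pos.2 hvi)] at hk'; linarith
      rw [abs_mul, abs_of_nonneg (by positivity : (0:ℝ) ≤ 2 * (k:ℝ))] at habs
      nlinarith
    · have h1 := (hk 1).2 i hid
      have hco : ((2 * ((1:ℕ):ℝ)) • v) i = (2 * ((1:ℕ):ℝ)) * v i := rfl
      rw [hco] at h1
      apply hvi
      have : (2 * ((1:ℕ):ℝ)) ≠ 0 := by norm_num
      exact (mul_eq_zero.1 h1).resolve_left this
  subst hv
  -- Step 2 : c = 1
  have hc1 : c = 1 := by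
    have hd0 : (0:ℝ) < d := by exact_mod_cast lt_of_lt_of_le Nat.zero_lt_one hd
    have h1 : ‖c • U (uvec n d)‖ ^ 2 ≤ d := by
      have := hfwd _ (uvec_mem (n := n) (d := d))
      rw [add_zero] at this
      exact normsq_le_of_mem this hdn
    have h2 : ‖c • U (uvec n d)‖ ^ 2 = c ^ 2 * (d : ℝ) := by
      rw [norm_smul, Real.norm_eq_abs, abs_of_pos hc, mul_pow, U.norm_map,
        normsq_uvec hdn]
    obtain ⟨x₁, hx₁, hux₁⟩ := hbwd (uvec n d) uvec_mem
    rw [add_zero] at hux₁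
    have h3 : (d : ℝ) = c ^ 2 * ‖x₁‖ ^ 2 := by
      rw [← normsq_uvec (n := n) hdn, ← hux₁, norm_smul, Real.norm_eq_abs,
        abs_of_pos hc, mul_pow, U.norm_map]
    have h4 : ‖x₁‖ ^ 2 ≤ d := normsq_le_of_mem hx₁ hdn
    have hcsq : c ^ 2 = 1 := by nlinarith
    have : (c - 1) * (c + 1) = 0 := by nlinarith
    rcases mul_eq_zero.1 this with h | h
    · linarith
    · linarith
  subst hc1
  have hgU : ∀ x, g x = U x := by intro x; rw [hgx]; simp
  have hU : ∀ x ∈ IcubeD n d, U x ∈ IcubeD n d := by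
    intro x hx; have := hfwd x hx; simpa using this
  have hUs : ∀ y ∈ IcubeD n d, U.symm y ∈ IcubeD n d := by
    intro y hy
    obtain ⟨x, hx, hxy⟩ := hbwd y hy
    simp only [one_smul, add_zero] at hxy
    rw [← hxy, U.symm_apply_apply]; exact hx
  -- classify U.symm on basis vectors
  have hcl := fun (i : Fin n) (hi : (i : ℕ) < d) =>
    basis_classify hdn (V := U.symm) hUs (by simpa using hU) i hi
  choose Gf sf hGd hs hform using hcl
  classical
  set F : Fin n → Fin n := fun k => if h : (k : ℕ) < d then Gf k h else k with hF
  set η : Fin n → ℝ := fun k => if h : (k : ℕ) < d then sf k h else 1 with hη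
  have hvec : ∀ (k : Fin n) (h : (k : ℕ) < d),
      U.symm (EuclideanSpace.single k 1) = sf k h • EuclideanSpace.single (Gf k h) 1 := by
    intro k h
    ext m
    rw [hform k h m]
    have : (sf k h • EuclideanSpace.single (Gf k h) (1:ℝ)) m
        = sf k h * (EuclideanSpace.single (Gf k h) (1:ℝ)) m := rfl
    rw [this, EuclideanSpace.single_apply]
    by_cases hm : m = Gf k h <;> simp [hm]
  have hFinj : Injective F := by
    intro k k' heq
    by_cases h : (k : ℕ) < d <;> by_cases h' : (k' : ℕ) < d
    · simp only [hF, dif_pos h, dif_pos h'] at heq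
      by_contra hne
      have h1 := hvec k h
      have h2 := hvec k' h'
      rw [heq] at h1
      have hs' := hs k' h'
      have hinj : (EuclideanSpace.single k (1:ℝ)) = (sf k h * sf k' h') •
          EuclideanSpace.single k' 1 := by
        apply U.symm.injective
        rw [h1, map_smul, h2, smul_smul, mul_assoc]
        congr 1
        rcases hs' with h3 | h3 <;> rw [h3] <;> norm_num
      have := congrArg (fun v : E n => v k) hinj
      rw [EuclideanSpace.single_apply] at this
      simp only [if_pos rfl] at this
      have hc2 : ((sf k h * sf k' h') • EuclideanSpace.single k' (1:ℝ)) k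
          = (sf k h * sf k' h') * (EuclideanSpace.single k' (1:ℝ)) k := rfl
      rw [hc2, EuclideanSpace.single_apply, if_neg hne] at this
      simp at this
    · exfalso
      simp only [hF, dif_pos h, dif_neg h'] at heq
      have := hGd k h; rw [heq] at this; omega
    · exfalso
      simp only [hF, dif_neg h, dif_pos h'] at heq
      have := hGd k' h'; rw [← heq] at this; omega
    · simpa [hF, dif_neg h, dif_neg h'] using heq
  set ρ : Equiv.Perm (Fin n) := Equiv.ofBijective F (Finite.injective_iff_bijective.1 hFinj)
    with hρ
  have hρapp : ∀ k, ρ k = F k := fun k => rfl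
  refine ⟨ρ, η, ?_, ?_, ?_⟩
  · intro k
    by_cases h : (k : ℕ) < d
    · simp only [hη, dif_pos h]; exact hs k h
    · simp only [hη, dif_neg h]; trivial
  · intro k
    constructor
    · intro h; rw [hρapp]; simp only [hF, dif_pos h]; exact hGd k h
    · intro h; by_contra h'
      rw [hρapp] at h; simp only [hF, dif_neg h'] at h; exact h' h
  · -- the formula, first on the cube, then on the slice
    have hXform : ∀ x ∈ IcubeD n d, ∀ k, U x k = η k * x (F k) := by
      intro x hx k
      by_cases h : (k : ℕ) < d
      · have h2 : U x k = sf k h * x (Gf k h) := by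
          have e1 : (inner ℝ (EuclideanSpace.single k (1:ℝ)) (U x) : ℝ) = U x k := by
            rw [EuclideanSpace.inner_single_left]; simp
          have e2 : (inner ℝ (U.symm (EuclideanSpace.single k 1)) x : ℝ)
              = sf k h * x (Gf k h) := by
            rw [hvec k h, inner_smul_left, EuclideanSpace.inner_single_left]; simp
          have e3 : (inner ℝ (EuclideanSpace.single k (1:ℝ)) (U x) : ℝ)
              = inner ℝ (U.symm (EuclideanSpace.single k 1)) x := by
            rw [← LinearIsometryEquiv.inner_map_map U.symm, U.symm_apply_apply]
          rw [← e1, e3, e2]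
        have hFk : F k = Gf k h := by simp only [hF]; rw [dif_pos h]
        have hηk : η k = sf k h := by simp only [hη]; rw [dif_pos h]
        rw [h2, hFk, hηk]
      · have hUx : U x ∈ IcubeD n d := hU x hx
        have hFk : F k = k := by simp only [hF]; rw [dif_neg h]
        rw [hUx.2 k (le_of_not_gt h), hFk, hx.2 k (le_of_not_gt h), mul_zero]
    intro x hsl k
    rw [hgU]
    -- scale x into the cube
    set t : ℝ := (1 + ‖x‖)⁻¹ with ht
    have ht0 : 0 < t := by
      rw [ht]; positivity
    have htx : t • x ∈ IcubeD n d := by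
      constructor
      · intro i _
        have hb : |x i| ≤ ‖x‖ := abs_coord_le_norm x i
        have hco : (t • x) i = t * x i := rfl
        rw [hco]
        have : |t * x i| ≤ 1 := by
          rw [abs_mul, abs_of_pos ht0]
          have h1 : t * |x i| ≤ t * (1 + ‖x‖) := by
            apply mul_le_mul_of_nonneg_left _ (le_of_lt ht0)
            linarith
          rw [ht] at h1 ⊢
          rw [inv_mul_cancel₀ (by positivity : (1:ℝ) + ‖x‖ ≠ 0)] at h1
          exact h1
        exact abs_le.1 this
      · intro i hi
        have hco : (t • x) i = t * x i := rfl
        rw [hco, hsl i hi, mul_zero]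
    have h1 := hXform (t • x) htx k
    rw [map_smul] at h1
    have hco1 : (t • U x) k = t * U x k := rfl
    have hco2 : (t • x) (F k) = t * x (F k) := rfl
    rw [hco1, hco2] at h1
    have : t * U x k = t * (η k * x (F k)) := by rw [h1]; ring
    have := mul_left_cancel₀ (ne_of_gt ht0) this
    rw [this, hρapp]
/-! ### Invariance of the combinatorial structures under signed permutations -/

lemma face_subset_IcubeD {n d e : ℕ} {f : Set (E n)} (hf : IsFaceD n d f e) :
    f ⊆ IcubeD n d := by
  obtain ⟨J, hJ1, hJ2, -, rfl⟩ := hf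
  intro x hx
  constructor
  · intro i hi
    rcases hJ1 i hi with h | h | h
    · have := hx i; rwa [h] at this
    · have := hx i; rw [h] at this; rw [this]; norm_num
    · have := hx i; rw [h] at this; rw [this]; norm_num
  · intro i hi
    have := hx i; rw [hJ2 i hi] at this; exact this

lemma singleton_ne_Icc (s : ℝ) : ({s} : Set ℝ) ≠ Icc (-1) 1 := by
  intro h
  have h1 : (1:ℝ) ∈ Icc (-1:ℝ) 1 := by norm_num
  have h2 : (-1:ℝ) ∈ Icc (-1:ℝ) 1 := by norm_num
  rw [← h] at h1 h2
  simp only [mem_singleton_iff] at h1 h2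
  rw [← h1] at h2; norm_num at h2

section SP

variable {n d : ℕ} {g : E n → E n} {ρ : Equiv.Perm (Fin n)} {η : Fin n → ℝ}

lemma SPdata.symm_lt (hsp : SPdata n d g ρ η) (m : Fin n) :
    (m : ℕ) < d ↔ ((ρ.symm m : Fin n) : ℕ) < d := by
  have := hsp.2.1 (ρ.symm m)
  rw [Equiv.apply_symm_apply] at this
  exact this.symm

lemma sp_preimage_hset (hsp : SPdata n d g ρ η)
    (hXpre : g ⁻¹' IcubeD n d = IcubeD n d) (i j : Fin n) (a b : ℝ) :
    g ⁻¹' HsetD n d i j a b = HsetD n d (ρ i) (ρ j) (a * η i) (b * η j) := by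
  ext x
  simp only [mem_preimage, mem_HsetD]
  constructor
  · rintro ⟨h1, h2⟩
    have hx : x ∈ IcubeD n d := by rw [← hXpre]; exact h1
    refine ⟨hx, ?_⟩
    have hf := hsp.2.2 x (fun i hi => hx.2 i hi)
    rw [hf i, hf j] at h2
    calc b * η j * x (ρ j) = b * (η j * x (ρ j)) := by ring
      _ ≤ a * (η i * x (ρ i)) := h2
      _ = a * η i * x (ρ i) := by ring
  · rintro ⟨h1, h2⟩
    have hgx : g x ∈ IcubeD n d := by rw [← mem_preimage, hXpre]; exact h1
    refine ⟨hgx, ?_⟩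
    have hf := hsp.2.2 x (fun i hi => h1.2 i hi)
    rw [hf i, hf j]
    calc b * (η j * x (ρ j)) = b * η j * x (ρ j) := by ring
      _ ≤ a * η i * x (ρ i) := h2
      _ = a * (η i * x (ρ i)) := by ring

lemma sp_fund (hsp : SPdata n d g ρ η)
    (hXpre : g ⁻¹' IcubeD n d = IcubeD n d) {S : Set (Set (E n))}
    (hS : IsFundSubsetD n d S) :
    IsFundSubsetD n d ((fun T => g ⁻¹' T) '' S) := by
  constructor
  · rintro T' ⟨T, hT, rfl⟩
    obtain ⟨i, j, hi, hj, a, b, ha, hb, rfl⟩ := hS.1 hT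
    refine ⟨ρ i, ρ j, (hsp.2.1 i).1 hi, (hsp.2.1 j).1 hj, a * η i, b * η j,
      pm_mul ha (hsp.1 i), pm_mul hb (hsp.1 j), ?_⟩
    exact sp_preimage_hset hsp hXpre i j a b
  · intro i j hi hj hij
    have hi' : ((ρ.symm i : Fin n) : ℕ) < d := (hsp.symm_lt i).1 hi
    have hj' : ((ρ.symm j : Fin n) : ℕ) < d := (hsp.symm_lt j).1 hj
    have key : ∀ δ : ℝ, (δ = 1 ∨ δ = -1) →
        ∃ A B : ℝ, (A = 1 ∨ A = -1) ∧ (B = 1 ∨ B = -1) ∧ A * B = δ ∧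
          HsetD n d i j A B ∈ (fun T => g ⁻¹' T) '' S := by
      intro δ hδ
      have hδ' : δ * (η (ρ.symm i) * η (ρ.symm j)) = 1 ∨
          δ * (η (ρ.symm i) * η (ρ.symm j)) = -1 :=
        pm_mul hδ (pm_mul (hsp.1 _) (hsp.1 _))
      obtain ⟨a, b, ha, hb, hab, hmem⟩ := CLS hS hi' hj' hδ'
      refine ⟨a * η (ρ.symm i), b * η (ρ.symm j),
        pm_mul ha (hsp.1 _), pm_mul hb (hsp.1 _), ?_, ?_⟩
      · have e1 : η (ρ.symm i) * η (ρ.symm i) = 1 := by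
          rcases hsp.1 (ρ.symm i) with h | h <;> rw [h] <;> norm_num
        have e2 : η (ρ.symm j) * η (ρ.symm j) = 1 := by
          rcases hsp.1 (ρ.symm j) with h | h <;> rw [h] <;> norm_num
        have e3 : (η (ρ.symm i) * η (ρ.symm j)) * (η (ρ.symm i) * η (ρ.symm j)) = 1 := by
          calc (η (ρ.symm i) * η (ρ.symm j)) * (η (ρ.symm i) * η (ρ.symm j))
              = (η (ρ.symm i) * η (ρ.symm i)) * (η (ρ.symm j) * η (ρ.symm j)) := by ring
            _ = 1 := by rw [e1, e2, one_mul]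
        calc a * η (ρ.symm i) * (b * η (ρ.symm j))
            = (a * b) * (η (ρ.symm i) * η (ρ.symm j)) := by ring
          _ = δ * ((η (ρ.symm i) * η (ρ.symm j)) * (η (ρ.symm i) * η (ρ.symm j))) := by
              rw [hab]; ring
          _ = δ := by rw [e3, mul_one]
      · refine ⟨HsetD n d (ρ.symm i) (ρ.symm j) a b, hmem, ?_⟩
        have heq := sp_preimage_hset hsp hXpre (ρ.symm i) (ρ.symm j) a b
        rw [Equiv.apply_symm_apply, Equiv.apply_symm_apply] at heq
        exact heq
    constructor
    · obtain ⟨A, B, hA, hB, hAB, hmem⟩ := key (-1) (Or.inr rfl)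
      rcases pm_cases_neg hA hB hAB with ⟨h1, h2⟩ | ⟨h1, h2⟩
      · left; rwa [h1, h2] at hmem
      · right; rwa [h1, h2] at hmem
    · obtain ⟨A, B, hA, hB, hAB, hmem⟩ := key 1 (Or.inl rfl)
      rcases pm_cases_pos hA hB hAB with ⟨h1, h2⟩ | ⟨h1, h2⟩
      · left; rwa [h1, h2] at hmem
      · right; rwa [h1, h2] at hmem

lemma sp_KoD (hsp : SPdata n d g ρ η)
    (hXpre : g ⁻¹' IcubeD n d = IcubeD n d) {K : Set (E n)} (hK : K ∈ KoD n d) :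
    g ⁻¹' K ∈ KoD n d := by
  obtain ⟨S, hS, rfl⟩ := hK
  refine ⟨(fun T => g ⁻¹' T) '' S, sp_fund hsp hXpre hS, ?_⟩
  rw [Set.preimage_sInter, Set.sInter_image]

lemma sp_face (hsp : SPdata n d g ρ η)
    (hXpre : g ⁻¹' IcubeD n d = IcubeD n d) {f : Set (E n)} {e : ℕ}
    (hf : IsFaceD n d f e) : IsFaceD n d (g ⁻¹' f) e := by
  obtain ⟨J, hJ1, hJ2, hcard, rfl⟩ := hf
  have hfsub : {x : E n | ∀ i, x i ∈ J i} ⊆ IcubeD n d :=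
    face_subset_IcubeD ⟨J, hJ1, hJ2, hcard, rfl⟩
  set J' : Fin n → Set ℝ := fun m => {t | η (ρ.symm m) * t ∈ J (ρ.symm m)} with hJ'
  have hsq : ∀ m : Fin n, η m * η m = 1 := by
    intro m; rcases hsp.1 m with h | h <;> rw [h] <;> norm_num
  have hJ'single : ∀ (m : Fin n) (s : ℝ), J (ρ.symm m) = {s} →
      J' m = {η (ρ.symm m) * s} := by
    intro m s h
    ext t
    simp only [hJ', mem_setOf_eq, h, mem_singleton_iff]
    constructor
    · intro ht
      rw [← ht, ← mul_assoc, hsq, one_mul]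
    · intro ht
      rw [ht, ← mul_assoc, hsq, one_mul]
  have hJ'Icc : ∀ m : Fin n, J (ρ.symm m) = Icc (-1) 1 → J' m = Icc (-1) 1 := by
    intro m h
    ext t
    simp only [hJ', mem_setOf_eq, h, mem_Icc]
    rcases hsp.1 (ρ.symm m) with hh | hh <;> rw [hh] <;>
      constructor <;> rintro ⟨u1, u2⟩ <;> constructor <;> linarith
  have hJ'zero : ∀ m : Fin n, J (ρ.symm m) = {0} → J' m = {0} := by
    intro m h
    have := hJ'single m 0 h
    rwa [mul_zero] at this
  have hIccIff : ∀ m : Fin n, J' m = Icc (-1) 1 ↔ J (ρ.symm m) = Icc (-1) 1 := by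
    intro m
    constructor
    · intro h
      by_contra hcon
      by_cases hm : ((ρ.symm m : Fin n) : ℕ) < d
      · rcases hJ1 _ hm with h1 | h1 | h1
        · exact hcon h1
        · rw [hJ'single m _ h1] at h; exact singleton_ne_Icc _ h
        · rw [hJ'single m _ h1] at h; exact singleton_ne_Icc _ h
      · rw [hJ'zero m (hJ2 _ (le_of_not_gt hm))] at h; exact singleton_ne_Icc _ h
    · exact hJ'Icc m
  refine ⟨J', ?_, ?_, ?_, ?_⟩
  · intro m hm
    have hm' : ((ρ.symm m : Fin n) : ℕ) < d := (hsp.symm_lt m).1 hm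
    rcases hJ1 _ hm' with h | h | h
    · exact Or.inl (hJ'Icc m h)
    · rcases hsp.1 (ρ.symm m) with hh | hh
      · right; left; rw [hJ'single m _ h, hh]; norm_num
      · right; right; rw [hJ'single m _ h, hh]; norm_num
    · rcases hsp.1 (ρ.symm m) with hh | hh
      · right; right; rw [hJ'single m _ h, hh]; norm_num
      · right; left; rw [hJ'single m _ h, hh]; norm_num
  · intro m hm
    have hm' : d ≤ ((ρ.symm m : Fin n) : ℕ) :=
      le_of_not_gt (fun hcon => not_lt.2 hm ((hsp.symm_lt m).2 hcon))
    exact hJ'zero m (hJ2 _ hm')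
  · have hseteq : {m : Fin n | J' m = Icc (-1) 1}
        = (fun k => ρ k) '' {k : Fin n | J k = Icc (-1) 1} := by
      ext m
      simp only [mem_setOf_eq, mem_image]
      constructor
      · intro h
        exact ⟨ρ.symm m, (hIccIff m).1 h, Equiv.apply_symm_apply ρ m⟩
      · rintro ⟨k, hk, rfl⟩
        rw [hIccIff, Equiv.symm_apply_apply]; exact hk
    rw [hseteq, Set.ncard_image_of_injective _ ρ.injective, hcard]
  · ext x
    simp only [mem_preimage, mem_setOf_eq]
    constructor
    · intro hgx
      have hgxc : g x ∈ IcubeD n d := hfsub hgx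
      have hxc : x ∈ IcubeD n d := by rw [← hXpre]; exact hgxc
      intro m
      have hform := hsp.2.2 x (fun i hi => hxc.2 i hi) (ρ.symm m)
      rw [Equiv.apply_symm_apply] at hform
      simp only [hJ', mem_setOf_eq]
      rw [← hform]
      exact hgx (ρ.symm m)
    · intro hx
      have hxc : x ∈ IcubeD n d := by
        constructor
        · intro m hm
          have hm' : ((ρ.symm m : Fin n) : ℕ) < d := (hsp.symm_lt m).1 hm
          have h := hx m
          simp only [hJ', mem_setOf_eq] at h
          rcases hJ1 _ hm' with h1 | h1 | h1 <;> rw [h1] at h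
          · rcases hsp.1 (ρ.symm m) with hh | hh <;> rw [hh] at h <;>
              simp only [one_mul, neg_mul, mem_Icc] at h ⊢
            · exact h
            · obtain ⟨u1, u2⟩ := h; constructor <;> linarith
          · simp only [mem_singleton_iff] at h
            rcases hsp.1 (ρ.symm m) with hh | hh <;> rw [hh] at h <;>
              constructor <;> nlinarith [h]
          · simp only [mem_singleton_iff] at h
            rcases hsp.1 (ρ.symm m) with hh | hh <;> rw [hh] at h <;>
              constructor <;> nlinarith [h]
        · intro m hm
          have hm' : d ≤ ((ρ.symm m : Fin n) : ℕ) :=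
            le_of_not_gt (fun hcon => not_lt.2 hm ((hsp.symm_lt m).2 hcon))
          have h := hx m
          simp only [hJ', mem_setOf_eq, hJ2 _ hm', mem_singleton_iff] at h
          rcases hsp.1 (ρ.symm m) with hh | hh <;> rw [hh] at h <;> linarith
      intro k
      have hform := hsp.2.2 x (fun i hi => hxc.2 i hi) k
      rw [hform]
      have h := hx (ρ k)
      simp only [hJ', mem_setOf_eq, Equiv.symm_apply_apply] at h
      exact h

end SP

/-- Conjugating symmetry between two normalizing maps of the same cube. -/
lemma exists_sp_conj {n d : ℕ} (hd : 1 ≤ d) (hdn : d ≤ n) {L L' : E n → E n}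
    (hL : ConfAffine n L) (hL' : ConfAffine n L') {C : Set (E n)}
    (hLC : L '' C = IcubeD n d) (hL'C : L' '' C = IcubeD n d) :
    ∃ (g : E n → E n) (ρ : Equiv.Perm (Fin n)) (η : Fin n → ℝ),
      Bijective g ∧ g ⁻¹' IcubeD n d = IcubeD n d ∧ SPdata n d g ρ η ∧
      ∀ X : Set (E n), L' ⁻¹' X = L ⁻¹' (g ⁻¹' X) := by
  obtain ⟨Li, hLi, hLi1, hLi2⟩ := hL.exists_inv
  set g : E n → E n := L' ∘ Li with hg
  have hgconf : ConfAffine n g := hL'.comp hLi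
  have hgL : ∀ x, g (L x) = L' x := by intro x; simp [hg, hLi1]
  have hgX : g '' IcubeD n d = IcubeD n d := by
    have h1 : g '' (L '' C) = L' '' C := by
      rw [← Set.image_comp]
      have h2 : g ∘ L = L' := funext hgL
      rw [h2]
    rw [hLC] at h1
    rw [h1, hL'C]
  have hbij : Bijective g := hgconf.bijective
  have hXpre : g ⁻¹' IcubeD n d = IcubeD n d := by
    calc g ⁻¹' IcubeD n d = g ⁻¹' (g '' IcubeD n d) := by rw [hgX]
      _ = IcubeD n d := Set.preimage_image_eq _ hbij.1
  obtain ⟨ρ, η, hsp⟩ := sym_classify hd hdn hgconf hgX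
  refine ⟨g, ρ, η, hbij, hXpre, hsp, ?_⟩
  intro X
  ext x
  simp only [mem_preimage]
  rw [← hgL x]
/-! ### Face data : a face together with a normalizing conformal map -/

lemma exists_perm_indicator {n e : ℕ} (A : Set (Fin n)) (hA : A.ncard = e) :
    ∃ ρ : Equiv.Perm (Fin n), ∀ i, i ∈ A ↔ ((ρ i : Fin n) : ℕ) < e := by
  classical
  have hen : e ≤ n := by
    rw [← hA]
    calc A.ncard ≤ (univ : Set (Fin n)).ncard := Set.ncard_le_ncard (subset_univ A)
      _ = n := by rw [Set.ncard_univ, Nat.card_eq_fintype_card, Fintype.card_fin]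
  have hcardA : Fintype.card A = A.ncard := by
    rw [Set.ncard_eq_toFinset_card', Set.toFinset_card]
  have hcardB : Fintype.card {k : Fin n | (k : ℕ) < e} = e := by
    conv_rhs => rw [← ncard_setOf_lt e hen]
    rw [Set.ncard_eq_toFinset_card', Set.toFinset_card]
  have hAB : Fintype.card A = Fintype.card {k : Fin n | (k : ℕ) < e} := by
    rw [hcardA, hA, hcardB]
  have hAB' : Fintype.card {x : Fin n // ¬ (x ∈ A)}
      = Fintype.card {x : Fin n // ¬ (x ∈ {k : Fin n | (k : ℕ) < e})} := by
    rw [Fintype.card_subtype_compl, Fintype.card_subtype_compl, hAB]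
  set eq1 : {x : Fin n // x ∈ A} ≃ {x : Fin n // x ∈ {k : Fin n | (k : ℕ) < e}} :=
    Fintype.equivOfCardEq hAB
  set eq2 : {x : Fin n // ¬ (x ∈ A)} ≃ {x : Fin n // ¬ (x ∈ {k : Fin n | (k : ℕ) < e})} :=
    Fintype.equivOfCardEq hAB'
  refine ⟨Equiv.subtypeCongr eq1 eq2, ?_⟩
  intro i
  constructor
  · intro hi
    have h2 : Equiv.subtypeCongr eq1 eq2 i = (eq1 ⟨i, hi⟩ : Fin n) := by
      simp [Equiv.subtypeCongr, hi]
    rw [h2]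
    exact (eq1 ⟨i, hi⟩).2
  · intro h
    by_contra hi
    have h2 : Equiv.subtypeCongr eq1 eq2 i = (eq2 ⟨i, hi⟩ : Fin n) := by
      simp [Equiv.subtypeCongr, hi]
    rw [h2] at h
    exact (eq2 ⟨i, hi⟩).2 h

structure FaceData (n d e : ℕ) where
  J : Fin n → Set ℝ
  hJ1 : ∀ i : Fin n, (i : ℕ) < d → (J i = Icc (-1 : ℝ) 1 ∨ J i = {-1} ∨ J i = {1})
  hJ2 : ∀ i : Fin n, d ≤ (i : ℕ) → J i = {0}
  z : E n
  hz1 : ∀ i : Fin n, J i = Icc (-1:ℝ) 1 → z i = 0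
  hz2 : ∀ i : Fin n, J i ≠ Icc (-1:ℝ) 1 → J i = {z i}
  ρ : Equiv.Perm (Fin n)
  hρ : ∀ i : Fin n, J i = Icc (-1:ℝ) 1 ↔ ((ρ i : Fin n) : ℕ) < e
  hen : e ≤ n

namespace FaceData

variable {n d e : ℕ}

def face (F : FaceData n d e) : Set (E n) := {x | ∀ i, x i ∈ F.J i}

/-- The normalizing conformal map of the face. -/
def M (F : FaceData n d e) : E n → E n := fun x => WithLp.toLp 2 (fun k => x (F.ρ.symm k) - F.z (F.ρ.symm k))

lemma z_pm (F : FaceData n d e) {i : Fin n} (hi : (i : ℕ) < d)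
    (h : F.J i ≠ Icc (-1:ℝ) 1) : F.z i = 1 ∨ F.z i = -1 := by
  rcases F.hJ1 i hi with h1 | h1 | h1
  · exact absurd h1 h
  · right
    have := F.hz2 i h
    rw [h1] at this
    exact (Set.singleton_eq_singleton_iff.1 this.symm)
  · left
    have := F.hz2 i h
    rw [h1] at this
    exact (Set.singleton_eq_singleton_iff.1 this.symm)

lemma z_zero_of_ge (F : FaceData n d e) {i : Fin n} (hi : d ≤ (i : ℕ)) : F.z i = 0 := by
  have h1 : F.J i = {0} := F.hJ2 i hi
  have h2 : F.J i ≠ Icc (-1:ℝ) 1 := by rw [h1]; exact singleton_ne_Icc 0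
  have := F.hz2 i h2
  rw [h1] at this
  exact (Set.singleton_eq_singleton_iff.1 this.symm)

lemma z_mem_face (F : FaceData n d e) : F.z ∈ F.face := by
  intro i
  by_cases h : F.J i = Icc (-1:ℝ) 1
  · rw [h, F.hz1 i h]; norm_num
  · rw [F.hz2 i h]; exact rfl

lemma lt_d_of_mem (F : FaceData n d e) {i : Fin n} (h : F.J i = Icc (-1:ℝ) 1) :
    (i : ℕ) < d := by
  by_contra hcon
  rw [F.hJ2 i (le_of_not_gt hcon)] at h
  exact singleton_ne_Icc 0 h

lemma isFace (F : FaceData n d e) : IsFaceD n d F.face e := by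
  refine ⟨F.J, F.hJ1, F.hJ2, ?_, rfl⟩
  have hseteq : {i : Fin n | F.J i = Icc (-1:ℝ) 1}
      = (fun k => F.ρ.symm k) '' {k : Fin n | (k : ℕ) < e} := by
    ext i
    simp only [mem_setOf_eq, mem_image]
    constructor
    · intro h
      exact ⟨F.ρ i, (F.hρ i).1 h, F.ρ.symm_apply_apply i⟩
    · rintro ⟨k, hk, rfl⟩
      rw [F.hρ, F.ρ.apply_symm_apply]; exact hk
  rw [hseteq, Set.ncard_image_of_injective _ F.ρ.symm.injective, ncard_setOf_lt e F.hen]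

lemma face_subset (F : FaceData n d e) : F.face ⊆ IcubeD n d :=
  face_subset_IcubeD F.isFace

lemma M_conf (F : FaceData n d e) : ConfAffine n (F.M) := by
  refine ⟨1, LinearIsometryEquiv.piLpCongrLeft 2 ℝ ℝ F.ρ,
    -(LinearIsometryEquiv.piLpCongrLeft 2 ℝ ℝ F.ρ F.z), by norm_num, ?_⟩
  intro x
  ext k
  have h1 : ∀ y : E n, (LinearIsometryEquiv.piLpCongrLeft 2 ℝ ℝ F.ρ y) k = y (F.ρ.symm k) :=
    fun y => rfl
  have h2 : ((1:ℝ) • (LinearIsometryEquiv.piLpCongrLeft 2 ℝ ℝ F.ρ x)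
      + -(LinearIsometryEquiv.piLpCongrLeft 2 ℝ ℝ F.ρ F.z)) k
      = (LinearIsometryEquiv.piLpCongrLeft 2 ℝ ℝ F.ρ x) k
        - (LinearIsometryEquiv.piLpCongrLeft 2 ℝ ℝ F.ρ F.z) k := by
    rw [one_smul]; rfl
  rw [h2, h1, h1]
  rfl

lemma M_preimage_cube (F : FaceData n d e) : F.M ⁻¹' (IcubeD n e) = F.face := by
  ext x
  simp only [mem_preimage, mem_IcubeD]
  constructor
  · rintro ⟨h1, h2⟩
    intro i
    by_cases h : F.J i = Icc (-1:ℝ) 1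
    · rw [h]
      have hlt : ((F.ρ i : Fin n) : ℕ) < e := (F.hρ i).1 h
      have := h1 (F.ρ i) hlt
      have hMi : F.M x (F.ρ i) = x i - F.z i := by
        show x (F.ρ.symm (F.ρ i)) - F.z (F.ρ.symm (F.ρ i)) = _
        rw [F.ρ.symm_apply_apply]
      rw [hMi, F.hz1 i h, sub_zero] at this
      exact this
    · rw [F.hz2 i h, mem_singleton_iff]
      have hlt : ¬ ((F.ρ i : Fin n) : ℕ) < e := fun hcon => h ((F.hρ i).2 hcon)
      have := h2 (F.ρ i) (le_of_not_gt hlt)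
      have hMi : F.M x (F.ρ i) = x i - F.z i := by
        show x (F.ρ.symm (F.ρ i)) - F.z (F.ρ.symm (F.ρ i)) = _
        rw [F.ρ.symm_apply_apply]
      rw [hMi] at this
      linarith [this]
  · intro hx
    constructor
    · intro k hk
      have h : F.J (F.ρ.symm k) = Icc (-1:ℝ) 1 := by
        rw [F.hρ, F.ρ.apply_symm_apply]; exact hk
      have := hx (F.ρ.symm k)
      rw [h] at this
      show x (F.ρ.symm k) - F.z (F.ρ.symm k) ∈ Icc (-1:ℝ) 1
      rw [F.hz1 _ h, sub_zero]
      exact this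
    · intro k hk
      have h : F.J (F.ρ.symm k) ≠ Icc (-1:ℝ) 1 := by
        intro hcon
        rw [F.hρ, F.ρ.apply_symm_apply] at hcon
        omega
      have := hx (F.ρ.symm k)
      rw [F.hz2 _ h, mem_singleton_iff] at this
      show x (F.ρ.symm k) - F.z (F.ρ.symm k) = 0
      rw [this, sub_self]

lemma M_preimage_hset (F : FaceData n d e) (i' j' : Fin n)
    (hi' : (i' : ℕ) < e) (hj' : (j' : ℕ) < e) (a b : ℝ) :
    F.M ⁻¹' (HsetD n e i' j' a b)
      = F.face ∩ HsetD n d (F.ρ.symm i') (F.ρ.symm j') a b := by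
  have hiA : F.J (F.ρ.symm i') = Icc (-1:ℝ) 1 := by
    rw [F.hρ, F.ρ.apply_symm_apply]; exact hi'
  have hjA : F.J (F.ρ.symm j') = Icc (-1:ℝ) 1 := by
    rw [F.hρ, F.ρ.apply_symm_apply]; exact hj'
  have hMi : ∀ x : E n, F.M x i' = x (F.ρ.symm i') := by
    intro x
    show x (F.ρ.symm i') - F.z (F.ρ.symm i') = _
    rw [F.hz1 _ hiA, sub_zero]
  have hMj : ∀ x : E n, F.M x j' = x (F.ρ.symm j') := by
    intro x
    show x (F.ρ.symm j') - F.z (F.ρ.symm j') = _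
    rw [F.hz1 _ hjA, sub_zero]
  ext x
  simp only [mem_preimage, mem_HsetD, mem_inter_iff]
  constructor
  · rintro ⟨h1, h2⟩
    have hxf : x ∈ F.face := by rw [← F.M_preimage_cube]; exact h1
    rw [hMi, hMj] at h2
    exact ⟨hxf, F.face_subset hxf, h2⟩
  · rintro ⟨h1, _, h2⟩
    have h3 : x ∈ F.M ⁻¹' (IcubeD n e) := by rw [F.M_preimage_cube]; exact h1
    exact ⟨h3, by rw [hMi, hMj]; exact h2⟩

lemma M_z_eq_zero (F : FaceData n d e) : F.M F.z = 0 := by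
  ext k
  show F.z (F.ρ.symm k) - F.z (F.ρ.symm k) = 0
  rw [sub_self]

end FaceData

open scoped Classical in
lemma exists_faceData {n d e : ℕ} {f : Set (E n)} (hf : IsFaceD n d f e) :
    ∃ F : FaceData n d e, F.face = f := by
  classical
  obtain ⟨J, hJ1, hJ2, hcard, rfl⟩ := hf
  set z : E n := WithLp.toLp 2 (fun i => if J i = Icc (-1:ℝ) 1 then 0
    else if (1:ℝ) ∈ J i then 1 else if (-1:ℝ) ∈ J i then -1 else 0) with hz
  have hz1 : ∀ i : Fin n, J i = Icc (-1:ℝ) 1 → z i = 0 := by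
    intro i h; simp only [hz]; rw [if_pos h]
  have hz2 : ∀ i : Fin n, J i ≠ Icc (-1:ℝ) 1 → J i = {z i} := by
    intro i h
    by_cases hid : (i : ℕ) < d
    · rcases hJ1 i hid with h1 | h1 | h1
      · exact absurd h1 h
      · have hn1 : (1:ℝ) ∉ J i := by rw [h1]; norm_num
        have hy1 : (-1:ℝ) ∈ J i := by rw [h1]; norm_num
        simp only [hz]
        rw [if_neg h, if_neg hn1, if_pos hy1, h1]
      · have hy1 : (1:ℝ) ∈ J i := by rw [h1]; norm_num
        simp only [hz]
        rw [if_neg h, if_pos hy1, h1]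
    · have h1 := hJ2 i (le_of_not_gt hid)
      have hn1 : (1:ℝ) ∉ J i := by rw [h1]; norm_num
      have hn2 : (-1:ℝ) ∉ J i := by rw [h1]; norm_num
      simp only [hz]
      rw [if_neg h, if_neg hn1, if_neg hn2, h1]
  obtain ⟨ρ, hρ⟩ := exists_perm_indicator {i : Fin n | J i = Icc (-1:ℝ) 1} hcard
  have hen : e ≤ n := by
    rw [← hcard]
    calc _ ≤ (univ : Set (Fin n)).ncard :=
        Set.ncard_le_ncard (subset_univ _)
      _ = n := by rw [Set.ncard_univ, Nat.card_eq_fintype_card, Fintype.card_fin]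
  exact ⟨⟨J, hJ1, hJ2, z, hz1, hz2, ρ, hρ, hen⟩, rfl⟩
/-! ### The boundary of the cube slice, facets, and the maximal coordinate -/

def BdD (n d : ℕ) : Set (E n) :=
  {x ∈ IcubeD n d | ∃ i : Fin n, (i : ℕ) < d ∧ (x i = 1 ∨ x i = -1)}

def FacetD (n d : ℕ) (p : Fin n) (s : ℝ) : Set (E n) := {x ∈ IcubeD n d | x p = s}

lemma facet_isFace {n d : ℕ} {p : Fin n} {s : ℝ} (hp : (p : ℕ) < d)
    (hs : s = 1 ∨ s = -1) (hdn : d ≤ n) :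
    IsFaceD n d (FacetD n d p s) (d - 1) := by
  classical
  set J : Fin n → Set ℝ :=
    fun i => if i = p then {s} else if (i : ℕ) < d then Icc (-1:ℝ) 1 else {0} with hJdef
  have hJapp : ∀ i : Fin n,
      J i = if i = p then {s} else if (i : ℕ) < d then Icc (-1:ℝ) 1 else {0} :=
    fun i => rfl
  refine ⟨J, ?_, ?_, ?_, ?_⟩
  · intro i hi
    rw [hJapp]
    by_cases h : i = p
    · rw [if_pos h]
      rcases hs with rfl | rfl
      · right; right; rfl
      · right; left; rfl
    · rw [if_neg h, if_pos hi]; left; rfl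
  · intro i hi
    have h : i ≠ p := by rintro rfl; omega
    rw [hJapp, if_neg h, if_neg (by omega : ¬ (i : ℕ) < d)]
  · have hseteq : {i : Fin n | J i = Icc (-1:ℝ) 1}
        = {i : Fin n | (i : ℕ) < d} \ {p} := by
      ext i
      simp only [mem_setOf_eq, mem_diff, mem_singleton_iff, hJapp]
      constructor
      · intro h
        by_cases h1 : i = p
        · rw [if_pos h1] at h; exact absurd h (singleton_ne_Icc s)
        · rw [if_neg h1] at h
          by_cases h2 : (i : ℕ) < d
          · exact ⟨h2, h1⟩
          · rw [if_neg h2] at h; exact absurd h (singleton_ne_Icc 0)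
      · rintro ⟨h1, h2⟩
        rw [if_neg h2, if_pos h1]
    rw [hseteq]
    have hp' : p ∈ {i : Fin n | (i : ℕ) < d} := hp
    have hfin : {i : Fin n | (i : ℕ) < d}.Finite := Set.toFinite _
    rw [Set.ncard_diff_singleton_of_mem hp', ncard_setOf_lt d hdn]
  · ext x
    simp only [FacetD, mem_setOf_eq, mem_sep_iff]
    constructor
    · rintro ⟨hx, hxp⟩
      intro i
      rw [hJapp]
      by_cases h : i = p
      · rw [if_pos h, h, hxp]; exact rfl
      · rw [if_neg h]
        by_cases h2 : (i : ℕ) < d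
        · rw [if_pos h2]; exact hx.1 i h2
        · rw [if_neg h2]; exact hx.2 i (le_of_not_gt h2)
    · intro hx
      have hxp : x p = s := by
        have := hx p; rwa [hJapp, if_pos rfl, mem_singleton_iff] at this
      refine ⟨⟨?_, ?_⟩, hxp⟩
      · intro i hi
        by_cases h : i = p
        · rw [h, hxp]; rcases hs with rfl | rfl <;> norm_num
        · have := hx i; rwa [hJapp, if_neg h, if_pos hi] at this
      · intro i hi
        have h : i ≠ p := by rintro rfl; omega
        have := hx i
        rwa [hJapp, if_neg h, if_neg (by omega : ¬ (i : ℕ) < d), mem_singleton_iff] at this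

lemma isFace_subset_BdD {n d e : ℕ} {f : Set (E n)} (hf : IsFaceD n d f e)
    (hed : e < d) (hdn : d ≤ n) : f ⊆ BdD n d := by
  have hsub := face_subset_IcubeD hf
  obtain ⟨J, hJ1, hJ2, hcard, rfl⟩ := hf
  obtain ⟨i₀, hi₀d, hi₀⟩ : ∃ i₀ : Fin n, (i₀ : ℕ) < d ∧ J i₀ ≠ Icc (-1:ℝ) 1 := by
    by_contra hcon
    push_neg at hcon
    have hsub2 : {i : Fin n | (i : ℕ) < d} ⊆ {i : Fin n | J i = Icc (-1:ℝ) 1} :=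
      fun i hi => hcon i hi
    have := Set.ncard_le_ncard hsub2 (Set.toFinite _)
    rw [hcard, ncard_setOf_lt d hdn] at this
    omega
  intro x hx
  refine ⟨hsub hx, i₀, hi₀d, ?_⟩
  rcases hJ1 i₀ hi₀d with h | h | h
  · exact absurd h hi₀
  · right; have := hx i₀; rwa [h, mem_singleton_iff] at this
  · left; have := hx i₀; rwa [h, mem_singleton_iff] at this

lemma facetD_subset_BdD {n d : ℕ} {p : Fin n} {s : ℝ} (hp : (p : ℕ) < d)
    (hs : s = 1 ∨ s = -1) : FacetD n d p s ⊆ BdD n d := by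
  rintro x ⟨hx, hxp⟩
  exact ⟨hx, p, hp, by rcases hs with rfl | rfl <;> [left; right] <;> exact hxp⟩

lemma finset_exists_max {ι : Type*} [DecidableEq ι] (R : ι → ι → Prop)
    (htrans : ∀ a b c, R a b → R b c → R a c) (s : Finset ι)
    (htot : ∀ i ∈ s, ∀ j ∈ s, R i j ∨ R j i) (hne : s.Nonempty) :
    ∃ k ∈ s, ∀ i ∈ s, R k i := by
  classical
  obtain ⟨k, hk, hkmax⟩ := s.exists_max_image
    (fun i => (s.filter (fun j => R i j)).card) hne
  refine ⟨k, hk, ?_⟩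
  intro i hi
  by_contra hcon
  have hRik : R i k := (htot k hk i hi).resolve_left hcon
  have hsub : s.filter (fun j => R k j) ⊆ s.filter (fun j => R i j) := by
    intro j hj
    rw [Finset.mem_filter] at hj ⊢
    exact ⟨hj.1, htrans i k j hRik hj.2⟩
  have hmem : i ∈ s.filter (fun j => R i j) := by
    rw [Finset.mem_filter]
    refine ⟨hi, ?_⟩
    rcases htot i hi i hi with h | h <;> exact h
  have hnmem : i ∉ s.filter (fun j => R k j) := by
    rw [Finset.mem_filter]
    rintro ⟨-, h⟩; exact hcon h
  have hlt : (s.filter (fun j => R k j)).card < (s.filter (fun j => R i j)).card := by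
    apply Finset.card_lt_card
    rw [Finset.ssubset_iff_of_subset hsub]
    exact ⟨i, hmem, hnmem⟩
  have := hkmax i hi
  omega

/-- The maximal-coordinate facet: `H ∩ ∂ = H ∩ F` for a suitable facet. -/
lemma KoD_bd_eq_facet {n d : ℕ} (hd : 1 ≤ d) (hdn : d ≤ n) {S : Set (Set (E n))}
    (hS : IsFundSubsetD n d S) :
    ∃ (k : Fin n) (s : ℝ), (k : ℕ) < d ∧ (s = 1 ∨ s = -1) ∧
      ⋂₀ S ∩ BdD n d = ⋂₀ S ∩ FacetD n d k s := by
  classical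
  have hsg : ∀ i : Fin n, (i : ℕ) < d →
      ∃ s : ℝ, (s = 1 ∨ s = -1) ∧ ∀ x ∈ ⋂₀ S, 0 ≤ s * x i := by
    intro i hi
    obtain ⟨a, b, ha, hb, hab, hmem⟩ := CLS hS hi hi (Or.inr rfl)
    rcases pm_cases_neg ha hb hab with ⟨h1, h2⟩ | ⟨h1, h2⟩
    · refine ⟨1, Or.inl rfl, fun x hx => ?_⟩
      have h3 := (hx _ hmem).2
      rw [h1, h2] at h3; linarith
    · refine ⟨-1, Or.inr rfl, fun x hx => ?_⟩
      have h3 := (hx _ hmem).2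
      rw [h1, h2] at h3; linarith
  choose! sg hsgpm hsg0 using hsg
  have htot : ∀ i j : Fin n, (i : ℕ) < d → (j : ℕ) < d →
      ((∀ x ∈ ⋂₀ S, sg j * x j ≤ sg i * x i) ∨
       (∀ x ∈ ⋂₀ S, sg i * x i ≤ sg j * x j)) := by
    intro i j hi hj
    obtain ⟨a, b, ha, hb, hab, hmem⟩ := CLS hS hi hj (pm_mul (hsgpm i hi) (hsgpm j hj))
    have hsgi : sg i ≠ 0 := by rcases hsgpm i hi with h | h <;> rw [h] <;> norm_num
    have hcase : a = sg i ∨ a = -sg i := by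
      rcases ha with h | h <;> rcases hsgpm i hi with h' | h' <;> rw [h, h'] <;> simp
    rcases hcase with hcase | hcase
    · left; intro x hx
      have h3 := (hx _ hmem).2
      have hb' : b = sg j := by
        rw [hcase] at hab
        exact mul_left_cancel₀ hsgi hab
      rwa [hcase, hb'] at h3
    · right; intro x hx
      have h3 := (hx _ hmem).2
      have hb' : b = -sg j := by
        rw [hcase] at hab
        have h5 : sg i * b = sg i * (-sg j) := by linarith [hab]
        exact mul_left_cancel₀ hsgi h5
      rw [hcase, hb'] at h3
      linarith
  have hn : 0 < n := lt_of_lt_of_le hd hdn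
  set T := Finset.filter (fun i : Fin n => (i : ℕ) < d) Finset.univ with hT
  have hTmem : ∀ i : Fin n, i ∈ T ↔ (i : ℕ) < d := by
    intro i; simp [hT]
  obtain ⟨k, hkT, hkmax⟩ := finset_exists_max
    (fun i j => ∀ x ∈ ⋂₀ S, sg j * x j ≤ sg i * x i)
    (fun a b c h1 h2 x hx => le_trans (h2 x hx) (h1 x hx)) T
    (fun i hi j hj => htot i j ((hTmem i).1 hi) ((hTmem j).1 hj))
    ⟨⟨0, hn⟩, (hTmem _).2 hd⟩
  have hkd : (k : ℕ) < d := (hTmem k).1 hkT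
  refine ⟨k, sg k, hkd, hsgpm k hkd, ?_⟩
  ext x
  simp only [mem_inter_iff]
  constructor
  · rintro ⟨hx, hxc, i, hid, hipm⟩
    refine ⟨hx, hxc, ?_⟩
    have h1 : sg i * x i = 1 := by
      have h0 := hsg0 i hid x hx
      rcases hsgpm i hid with h | h <;> rcases hipm with h' | h' <;>
        rw [h, h'] at h0 ⊢ <;> norm_num at h0 <;> norm_num
    have h2 := hkmax i ((hTmem i).2 hid) x hx
    have h3 : sg k * x k ≤ 1 := by
      have hb := hxc.1 k hkd
      rcases hsgpm k hkd with h | h <;> rw [h] <;> simp at hb ⊢ <;> linarith [hb.1, hb.2]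
    have h4 : sg k * x k = 1 := by rw [h1] at h2; linarith
    rcases hsgpm k hkd with h | h <;> rw [h] at h4 ⊢ <;> linarith
  · rintro ⟨hx, hxc, hxk⟩
    exact ⟨hx, hxc, k, hkd,
      by rcases hsgpm k hkd with h | h <;> rw [h] at hxk <;> [left; right] <;> exact hxk⟩
/-! ### Core 1 : extending a cell on a face to a full-dimensional cell -/

lemma pm_neg {s : ℝ} (h : s = 1 ∨ s = -1) : -s = 1 ∨ -s = -1 := by
  rcases h with h | h <;> rw [h] <;> [right; left] <;> norm_num

lemma pm_sq {s : ℝ} (h : s = 1 ∨ s = -1) : s * s = 1 := by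
  rcases h with h | h <;> rw [h] <;> norm_num

lemma FaceData.ncard_Icc {n d e : ℕ} (F : FaceData n d e) :
    {i : Fin n | F.J i = Icc (-1:ℝ) 1}.ncard = e := by
  obtain ⟨J, h1, h2, h3, h4⟩ := F.isFace
  -- not usable directly; recompute as in isFace
  have hseteq : {i : Fin n | F.J i = Icc (-1:ℝ) 1}
      = (fun k => F.ρ.symm k) '' {k : Fin n | (k : ℕ) < e} := by
    ext i
    simp only [mem_setOf_eq, mem_image]
    constructor
    · intro h
      exact ⟨F.ρ i, (F.hρ i).1 h, F.ρ.symm_apply_apply i⟩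
    · rintro ⟨k, hk, rfl⟩
      rw [F.hρ, F.ρ.apply_symm_apply]; exact hk
  rw [hseteq, Set.ncard_image_of_injective _ F.ρ.symm.injective, ncard_setOf_lt e F.hen]

/-- The cell on the face `F` determined by the fundamental subset `S'`. -/
def cellW {n d e : ℕ} (F : FaceData n d e) (S' : Set (Set (E n))) : Set (E n) :=
  F.M ⁻¹' (⋂₀ S') ∩ F.face

/-- All valid constraints. -/
def SvOf {n : ℕ} (d : ℕ) (W : Set (E n)) : Set (Set (E n)) :=
  {X | X ∈ HfamD n d ∧ W ⊆ X}

lemma zero_mem_sInter_of_ham {n e : ℕ} {S' : Set (Set (E n))}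
    (hS' : IsFundSubsetD n e S') : (0 : E n) ∈ ⋂₀ S' := by
  intro T hT
  obtain ⟨i, j, _, _, a, b, _, _, rfl⟩ := hS'.1 hT
  exact zero_mem_HsetD

lemma core1 {n d e : ℕ} (F : FaceData n d e) (he : e < d) (hdn : d ≤ n)
    {S' : Set (Set (E n))} (hS' : IsFundSubsetD n e S') :
    IsFundSubsetD n d (SvOf d (cellW F S')) ∧
    (⋂₀ (SvOf d (cellW F S')) ∩ F.face = cellW F S') ∧
    (⋂₀ (SvOf d (cellW F S')) ∩ BdD n d = cellW F S') ∧
    (∃ p : Fin n, (p : ℕ) < d ∧ (F.z p = 1 ∨ F.z p = -1) ∧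
      ⋂₀ (SvOf d (cellW F S')) ∩ FacetD n d p (F.z p) = cellW F S') ∧
    F.z ∈ cellW F S' := by
  classical
  set W : Set (E n) := cellW F S' with hWdef
  have hWface : W ⊆ F.face := fun x hx => hx.2
  have hWcube : W ⊆ IcubeD n d := fun x hx => F.face_subset hx.2
  have hWconst : ∀ i : Fin n, F.J i ≠ Icc (-1:ℝ) 1 → ∀ x ∈ W, x i = F.z i := by
    intro i hi x hx
    have := hWface hx i
    rwa [F.hz2 i hi, mem_singleton_iff] at this
  -- existence of a fixed coordinate
  obtain ⟨p, hpd, hpJ⟩ : ∃ p : Fin n, (p : ℕ) < d ∧ F.J p ≠ Icc (-1:ℝ) 1 := by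
    by_contra hcon
    push_neg at hcon
    have hsub2 : {i : Fin n | (i : ℕ) < d} ⊆ {i : Fin n | F.J i = Icc (-1:ℝ) 1} :=
      fun i hi => hcon i hi
    have := Set.ncard_le_ncard hsub2 (Set.toFinite _)
    rw [F.ncard_Icc, ncard_setOf_lt d hdn] at this
    omega
  have hzp := F.z_pm hpd hpJ
  -- transported constraints are valid
  have htrans : ∀ (i' j' : Fin n), (i' : ℕ) < e → (j' : ℕ) < e → ∀ a b : ℝ,
      HsetD n e i' j' a b ∈ S' →
      W ⊆ HsetD n d (F.ρ.symm i') (F.ρ.symm j') a b := by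
    intro i' j' hi' hj' a b hmem x hx
    have h1 : F.M x ∈ HsetD n e i' j' a b := hx.1 _ hmem
    have h2 : x ∈ F.M ⁻¹' (HsetD n e i' j' a b) := h1
    rw [F.M_preimage_hset i' j' hi' hj' a b] at h2
    exact h2.2
  have hltd : ∀ i' : Fin n, (i' : ℕ) < e → ((F.ρ.symm i' : Fin n) : ℕ) < d := by
    intro i' hi'
    apply F.lt_d_of_mem
    rw [F.hρ, F.ρ.apply_symm_apply]
    exact hi'
  -- Fundamentality of the set of valid constraints
  have hkey : ∀ i j : Fin n, (i : ℕ) < d → (j : ℕ) < d → ∀ δ : ℝ, (δ = 1 ∨ δ = -1) →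
      ∃ A B : ℝ, (A = 1 ∨ A = -1) ∧ (B = 1 ∨ B = -1) ∧ A * B = δ ∧
        HsetD n d i j A B ∈ SvOf d W := by
    intro i j hi hj δ hδ
    by_cases hiA : F.J i = Icc (-1:ℝ) 1
    · by_cases hjA : F.J j = Icc (-1:ℝ) 1
      · -- both free : transport from S'
        have hi' : ((F.ρ i : Fin n) : ℕ) < e := (F.hρ i).1 hiA
        have hj' : ((F.ρ j : Fin n) : ℕ) < e := (F.hρ j).1 hjA
        obtain ⟨a, b, ha, hb, hab, hmem⟩ := CLS hS' hi' hj' hδ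
        refine ⟨a, b, ha, hb, hab, ?_, ?_⟩
        · exact ⟨i, j, hi, hj, a, b, ha, hb, rfl⟩
        · have := htrans (F.ρ i) (F.ρ j) hi' hj' a b hmem
          rwa [F.ρ.symm_apply_apply, F.ρ.symm_apply_apply] at this
      · -- j is fixed : use B := - z j
        have hzj := F.z_pm hj hjA
        refine ⟨δ * (-F.z j), -F.z j, pm_mul hδ (pm_neg hzj), pm_neg hzj, ?_, ?_, ?_⟩
        · have h1 : (-F.z j) * (-F.z j) = 1 := pm_sq (pm_neg hzj)
          calc δ * (-F.z j) * (-F.z j) = δ * ((-F.z j) * (-F.z j)) := by ring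
            _ = δ := by rw [h1, mul_one]
        · exact ⟨i, j, hi, hj, _, _, pm_mul hδ (pm_neg hzj), pm_neg hzj, rfl⟩
        · intro x hx
          refine ⟨hWcube hx, ?_⟩
          have hxj : x j = F.z j := hWconst j hjA x hx
          have hxi := (hWcube hx).1 i hi
          have h2 : -F.z j * x j = -1 := by
            rw [hxj]; rcases hzj with h | h <;> rw [h] <;> norm_num
          rw [h2]
          rcases pm_mul hδ (pm_neg hzj) with h | h <;> rw [h] <;>
            [linarith [hxi.1]; linarith [hxi.2]]
    · -- i is fixed : use A := z i
      have hzi := F.z_pm hi hiA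
      refine ⟨F.z i, δ * F.z i, hzi, pm_mul hδ hzi, ?_, ?_, ?_⟩
      · calc F.z i * (δ * F.z i) = δ * (F.z i * F.z i) := by ring
          _ = δ := by rw [pm_sq hzi, mul_one]
      · exact ⟨i, j, hi, hj, _, _, hzi, pm_mul hδ hzi, rfl⟩
      · intro x hx
        refine ⟨hWcube hx, ?_⟩
        have hxi : x i = F.z i := hWconst i hiA x hx
        have h2 : F.z i * x i = 1 := by rw [hxi]; exact pm_sq hzi
        rw [h2]
        have hxj := (hWcube hx).1 j hj
        rcases pm_mul hδ hzi with h | h <;> rw [h] <;>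
          [linarith [hxj.2]; linarith [hxj.1]]
  have hfund : IsFundSubsetD n d (SvOf d W) := by
    constructor
    · exact fun X hX => hX.1
    · intro i j hi hj _
      constructor
      · obtain ⟨A, B, hA, hB, hAB, hmem⟩ := hkey i j hi hj (-1) (Or.inr rfl)
        rcases pm_cases_neg hA hB hAB with ⟨h1, h2⟩ | ⟨h1, h2⟩
        · left; rwa [h1, h2] at hmem
        · right; rwa [h1, h2] at hmem
      · obtain ⟨A, B, hA, hB, hAB, hmem⟩ := hkey i j hi hj 1 (Or.inl rfl)
        rcases pm_cases_pos hA hB hAB with ⟨h1, h2⟩ | ⟨h1, h2⟩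
        · left; rwa [h1, h2] at hmem
        · right; rwa [h1, h2] at hmem
  -- the face-intersection identity
  have hWsInter : W ⊆ ⋂₀ (SvOf d W) := by
    intro x hx T hT
    exact hT.2 hx
  have hface_eq : ⋂₀ (SvOf d W) ∩ F.face = W := by
    apply Set.Subset.antisymm
    · rintro x ⟨hx1, hx2⟩
      refine ⟨?_, hx2⟩
      intro T hT
      obtain ⟨i', j', hi', hj', a, b, ha, hb, rfl⟩ := hS'.1 hT
      have hX : HsetD n d (F.ρ.symm i') (F.ρ.symm j') a b ∈ SvOf d W := by
        refine ⟨⟨_, _, hltd i' hi', hltd j' hj', a, b, ha, hb, rfl⟩, ?_⟩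
        exact htrans i' j' hi' hj' a b hT
      have h3 : x ∈ F.face ∩ HsetD n d (F.ρ.symm i') (F.ρ.symm j') a b :=
        ⟨hx2, hx1 _ hX⟩
      rw [← F.M_preimage_hset i' j' hi' hj' a b] at h3
      exact h3
    · exact fun x hx => ⟨hWsInter hx, hWface hx⟩
  -- the boundary identity
  have hbd_eq : ⋂₀ (SvOf d W) ∩ BdD n d = W := by
    apply Set.Subset.antisymm
    · rintro x ⟨hx1, hxc, i₀, hi₀d, hi₀pm⟩
      -- x agrees with z on all fixed coordinates
      have hfix : ∀ i : Fin n, (i : ℕ) < d → F.J i ≠ Icc (-1:ℝ) 1 → x i = F.z i := by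
        intro i hid hiJ
        have hzi := F.z_pm hid hiJ
        have hval : ∀ η : ℝ, (η = 1 ∨ η = -1) →
            HsetD n d i i₀ (F.z i) η ∈ SvOf d W := by
          intro η hη
          refine ⟨⟨i, i₀, hid, hi₀d, _, _, hzi, hη, rfl⟩, ?_⟩
          intro y hy
          refine ⟨hWcube hy, ?_⟩
          have hyi : y i = F.z i := hWconst i hiJ y hy
          have h2 : F.z i * y i = 1 := by rw [hyi]; exact pm_sq hzi
          rw [h2]
          have hyb := (hWcube hy).1 i₀ hi₀d
          rcases hη with h | h <;> rw [h] <;> [linarith [hyb.2]; linarith [hyb.1]]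
        have hup : F.z i * x i ≤ 1 := by
          have hxb := hxc.1 i hid
          rcases hzi with h | h <;> rw [h] <;> [linarith [hxb.2]; linarith [hxb.1]]
        have hlow : 1 ≤ F.z i * x i := by
          rcases hi₀pm with h | h
          · have := (hx1 _ (hval 1 (Or.inl rfl))).2
            rw [h] at this; linarith
          · have := (hx1 _ (hval (-1) (Or.inr rfl))).2
            rw [h] at this; linarith
        have : F.z i * x i = 1 := le_antisymm hup hlow
        rcases hzi with h | h <;> rw [h] at this ⊢ <;> linarith
      have hxface : x ∈ F.face := by
        intro i
        by_cases hiJ : F.J i = Icc (-1:ℝ) 1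
        · rw [hiJ]
          exact hxc.1 i (F.lt_d_of_mem hiJ)
        · rw [F.hz2 i hiJ, mem_singleton_iff]
          by_cases hid : (i : ℕ) < d
          · exact hfix i hid hiJ
          · rw [hxc.2 i (le_of_not_gt hid), F.z_zero_of_ge (le_of_not_gt hid)]
      rw [← hface_eq]
      exact ⟨hx1, hxface⟩
    · intro x hx
      exact ⟨hWsInter hx, isFace_subset_BdD F.isFace he hdn (hWface hx)⟩
  refine ⟨hfund, hface_eq, hbd_eq, ⟨p, hpd, hzp, ?_⟩, ?_⟩
  · apply Set.Subset.antisymm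
    · rintro x ⟨hx1, hxc, hxp⟩
      rw [← hbd_eq]
      exact ⟨hx1, facetD_subset_BdD hpd hzp ⟨hxc, hxp⟩⟩
    · intro x hx
      refine ⟨hWsInter hx, hWcube hx, ?_⟩
      have := hWface hx p
      rwa [F.hz2 p hpJ, mem_singleton_iff] at this
  · refine ⟨?_, F.z_mem_face⟩
    show F.M F.z ∈ ⋂₀ S'
    rw [F.M_z_eq_zero]
    exact zero_mem_sInter_of_ham hS'
/-! ### Core 2 : intersecting a full-dimensional cell with a face -/

lemma core2 {n d e : ℕ} (F : FaceData n d e) (hdn : d ≤ n)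
    {S : Set (Set (E n))} (hS : IsFundSubsetD n d S)
    (hW : (⋂₀ S ∩ F.face).Nonempty) :
    ∃ (e' : ℕ) (F' : FaceData n d e') (S'' : Set (Set (E n))),
      e' ≤ e ∧ IsFundSubsetD n e' S'' ∧
      ⋂₀ S ∩ F.face = F'.M ⁻¹' (⋂₀ S'') ∩ F'.face := by
  classical
  set W : Set (E n) := ⋂₀ S ∩ F.face with hWdef
  obtain ⟨w₀, hw₀⟩ := hW
  have hWface : W ⊆ F.face := fun x hx => hx.2
  have hWcube : W ⊆ IcubeD n d := fun x hx => F.face_subset hx.2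
  have hWS : W ⊆ ⋂₀ S := fun x hx => hx.1
  set A₁ : Set (Fin n) := {i | F.J i = Icc (-1:ℝ) 1 ∧
    ((∀ x ∈ W, x i = 1) ∨ (∀ x ∈ W, x i = -1))} with hA₁
  have hA₁const : ∀ i ∈ A₁, ∀ x ∈ W, x i = w₀ i := by
    rintro i ⟨-, h | h⟩ x hx
    · rw [h x hx, h w₀ hw₀]
    · rw [h x hx, h w₀ hw₀]
  have hA₁pm : ∀ i ∈ A₁, w₀ i = 1 ∨ w₀ i = -1 := by
    rintro i ⟨-, h | h⟩
    · left; exact h w₀ hw₀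
    · right; exact h w₀ hw₀
  -- the constant value on non-free coordinates
  have hconst : ∀ i : Fin n, (i : ℕ) < d → (i ∈ A₁ ∨ F.J i ≠ Icc (-1:ℝ) 1) →
      (∀ x ∈ W, x i = w₀ i) ∧ (w₀ i = 1 ∨ w₀ i = -1) := by
    intro i hid hi
    rcases hi with hi | hi
    · exact ⟨hA₁const i hi, hA₁pm i hi⟩
    · have hz := F.z_pm hid hi
      have hcv : ∀ x ∈ W, x i = F.z i := by
        intro x hx
        have := hWface hx i
        rwa [F.hz2 i hi, mem_singleton_iff] at this
      have hw0 : w₀ i = F.z i := hcv w₀ hw₀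
      refine ⟨fun x hx => by rw [hcv x hx, hw0], by rw [hw0]; exact hz⟩
  -- the refined face data
  set J' : Fin n → Set ℝ := fun i => if i ∈ A₁ then {w₀ i} else F.J i with hJ'def
  have hJ'app : ∀ i, J' i = if i ∈ A₁ then {w₀ i} else F.J i := fun i => rfl
  have hA₁d : ∀ i ∈ A₁, (i : ℕ) < d := fun i hi => F.lt_d_of_mem hi.1
  have hJ'1 : ∀ i : Fin n, (i : ℕ) < d →
      (J' i = Icc (-1:ℝ) 1 ∨ J' i = {-1} ∨ J' i = {1}) := by
    intro i hid
    rw [hJ'app]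
    by_cases h : i ∈ A₁
    · rw [if_pos h]
      rcases hA₁pm i h with h1 | h1 <;> rw [h1]
      · right; right; rfl
      · right; left; rfl
    · rw [if_neg h]; exact F.hJ1 i hid
  have hJ'2 : ∀ i : Fin n, d ≤ (i : ℕ) → J' i = {0} := by
    intro i hid
    have h : i ∉ A₁ := fun hc => by have := hA₁d i hc; omega
    rw [hJ'app, if_neg h]; exact F.hJ2 i hid
  set z' : E n := WithLp.toLp 2 (fun i => if i ∈ A₁ then w₀ i else F.z i) with hz'def
  have hz'app : ∀ i, z' i = if i ∈ A₁ then w₀ i else F.z i := fun i => rfl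
  have hz'1 : ∀ i : Fin n, J' i = Icc (-1:ℝ) 1 → z' i = 0 := by
    intro i h
    rw [hJ'app] at h
    by_cases h1 : i ∈ A₁
    · rw [if_pos h1] at h; exact absurd h (singleton_ne_Icc _)
    · rw [if_neg h1] at h
      rw [hz'app, if_neg h1]
      exact F.hz1 i h
  have hz'2 : ∀ i : Fin n, J' i ≠ Icc (-1:ℝ) 1 → J' i = {z' i} := by
    intro i h
    rw [hJ'app] at h ⊢
    rw [hz'app]
    by_cases h1 : i ∈ A₁
    · rw [if_pos h1, if_pos h1]
    · rw [if_neg h1] at h ⊢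
      rw [if_neg h1]
      exact F.hz2 i h
  set A' : Set (Fin n) := {i | J' i = Icc (-1:ℝ) 1} with hA'def
  set e' : ℕ := A'.ncard with he'def
  obtain ⟨ρ', hρ'⟩ := exists_perm_indicator A' rfl
  have hen' : e' ≤ n := by
    rw [he'def]
    calc A'.ncard ≤ (univ : Set (Fin n)).ncard := Set.ncard_le_ncard (subset_univ A')
      _ = n := by rw [Set.ncard_univ, Nat.card_eq_fintype_card, Fintype.card_fin]
  set F' : FaceData n d e' := ⟨J', hJ'1, hJ'2, z', hz'1, hz'2, ρ', hρ', hen'⟩ with hF'def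
  have hF'J : ∀ i, F'.J i = J' i := fun i => rfl
  have hA'sub : A' ⊆ {i : Fin n | F.J i = Icc (-1:ℝ) 1} := by
    intro i hi
    rw [hA'def, mem_setOf_eq, hJ'app] at hi
    by_cases h1 : i ∈ A₁
    · rw [if_pos h1] at hi; exact absurd hi (singleton_ne_Icc _)
    · rwa [if_neg h1] at hi
  have he'e : e' ≤ e := by
    rw [he'def, ← F.ncard_Icc]
    exact Set.ncard_le_ncard hA'sub (Set.toFinite _)
  have hA'A₁ : ∀ i ∈ A', i ∉ A₁ := by
    intro i hi hc
    rw [hA'def, mem_setOf_eq, hJ'app, if_pos hc] at hi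
    exact absurd hi (singleton_ne_Icc _)
  -- W sits inside the refined face
  have hWface' : W ⊆ F'.face := by
    intro x hx i
    rw [hF'J, hJ'app]
    by_cases h : i ∈ A₁
    · rw [if_pos h, mem_singleton_iff]
      exact hA₁const i h x hx
    · rw [if_neg h]
      exact hWface hx i
  have hface'face : F'.face ⊆ F.face := by
    intro x hx i
    have := hx i
    rw [hF'J, hJ'app] at this
    by_cases h : i ∈ A₁
    · rw [if_pos h, mem_singleton_iff] at this
      rw [this, h.1]
      have := hWface hw₀ i
      rwa [h.1] at this
    · rwa [if_neg h] at this
  -- the constant coordinates of the refined face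
  have hconst' : ∀ i : Fin n, (i : ℕ) < d → i ∉ A' →
      (∀ x ∈ F'.face, x i = w₀ i) ∧ (w₀ i = 1 ∨ w₀ i = -1) := by
    intro i hid hi
    have hcase : i ∈ A₁ ∨ F.J i ≠ Icc (-1:ℝ) 1 := by
      by_cases h1 : i ∈ A₁
      · exact Or.inl h1
      · right
        intro hc
        apply hi
        rw [hA'def, mem_setOf_eq, hJ'app, if_neg h1]
        exact hc
    refine ⟨?_, (hconst i hid hcase).2⟩
    intro x hx
    have := hx i
    rw [hF'J, hJ'app] at this
    by_cases h1 : i ∈ A₁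
    · rwa [if_pos h1, mem_singleton_iff] at this
    · rw [if_neg h1, F.hz2 i (hcase.resolve_left h1), mem_singleton_iff] at this
      have hz0 : w₀ i = F.z i := by
        have h2 := hWface hw₀ i
        rwa [F.hz2 i (hcase.resolve_left h1), mem_singleton_iff] at h2
      rw [this]
      exact hz0.symm
  -- the valid transported constraints
  set S'' : Set (Set (E n)) := {X | X ∈ HfamD n e' ∧ ∀ x ∈ W, F'.M x ∈ X} with hS''def
  have hA'ltd : ∀ i ∈ A', (i : ℕ) < d := by
    intro i hi
    exact F'.lt_d_of_mem hi
  have hvalid : ∀ (i j : Fin n), i ∈ A' → j ∈ A' → ∀ a b : ℝ,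
      (a = 1 ∨ a = -1) → (b = 1 ∨ b = -1) →
      (∀ x ∈ W, x ∈ HsetD n d i j a b) →
      HsetD n e' (ρ' i) (ρ' j) a b ∈ S'' := by
    intro i j hi hj a b ha hb hval
    have hi' : ((ρ' i : Fin n) : ℕ) < e' := (hρ' i).1 hi
    have hj' : ((ρ' j : Fin n) : ℕ) < e' := (hρ' j).1 hj
    refine ⟨⟨ρ' i, ρ' j, hi', hj', a, b, ha, hb, rfl⟩, ?_⟩
    intro x hx
    have h2 : x ∈ F'.face ∩ HsetD n d i j a b := ⟨hWface' hx, hval x hx⟩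
    have h3 : x ∈ F'.M ⁻¹' (HsetD n e' (ρ' i) (ρ' j) a b) := by
      rw [F'.M_preimage_hset (ρ' i) (ρ' j) hi' hj' a b]
      have e1 : F'.ρ.symm (ρ' i) = i := ρ'.symm_apply_apply i
      have e2 : F'.ρ.symm (ρ' j) = j := ρ'.symm_apply_apply j
      rw [e1, e2]
      exact h2
    exact h3
  have hfund'' : IsFundSubsetD n e' S'' := by
    constructor
    · exact fun X hX => hX.1
    · intro i' j' hi' hj' _
      have hiA : (ρ'.symm i') ∈ A' := by rw [hρ', ρ'.apply_symm_apply]; exact hi'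
      have hjA : (ρ'.symm j') ∈ A' := by rw [hρ', ρ'.apply_symm_apply]; exact hj'
      have hkey : ∀ δ : ℝ, (δ = 1 ∨ δ = -1) →
          ∃ A B : ℝ, (A = 1 ∨ A = -1) ∧ (B = 1 ∨ B = -1) ∧ A * B = δ ∧
            HsetD n e' i' j' A B ∈ S'' := by
        intro δ hδ
        obtain ⟨a, b, ha, hb, hab, hmem⟩ :=
          CLS hS (hA'ltd _ hiA) (hA'ltd _ hjA) hδ
        have := hvalid (ρ'.symm i') (ρ'.symm j') hiA hjA a b ha hb
          (fun x hx => hWS hx _ hmem)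
        rw [ρ'.apply_symm_apply, ρ'.apply_symm_apply] at this
        exact ⟨a, b, ha, hb, hab, this⟩
      constructor
      · obtain ⟨A, B, hA, hB, hAB, hmem⟩ := hkey (-1) (Or.inr rfl)
        rcases pm_cases_neg hA hB hAB with ⟨h1, h2⟩ | ⟨h1, h2⟩
        · left; rwa [h1, h2] at hmem
        · right; rwa [h1, h2] at hmem
      · obtain ⟨A, B, hA, hB, hAB, hmem⟩ := hkey 1 (Or.inl rfl)
        rcases pm_cases_pos hA hB hAB with ⟨h1, h2⟩ | ⟨h1, h2⟩
        · left; rwa [h1, h2] at hmem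
        · right; rwa [h1, h2] at hmem
  refine ⟨e', F', S'', he'e, hfund'', ?_⟩
  apply Set.Subset.antisymm
  · intro x hx
    refine ⟨?_, hWface' hx⟩
    intro T hT
    exact hT.2 x hx
  · rintro x ⟨hx1, hx2⟩
    have hxcube : x ∈ IcubeD n d := F'.face_subset hx2
    refine ⟨?_, hface'face hx2⟩
    intro T hT
    obtain ⟨i, j, hid, hjd, a, b, ha, hb, rfl⟩ := hS.1 hT
    refine ⟨hxcube, ?_⟩
    by_cases hiA : i ∈ A'
    · by_cases hjA : j ∈ A'
      · -- both free
        have hmemS : ∀ y ∈ W, y ∈ HsetD n d i j a b := fun y hy => hWS hy _ hT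
        have hX := hvalid i j hiA hjA a b ha hb hmemS
        have h3 := hx1 _ hX
        rw [← mem_preimage, F'.M_preimage_hset (ρ' i) (ρ' j)
          ((hρ' i).1 hiA) ((hρ' j).1 hjA) a b] at h3
        have e1 : F'.ρ.symm (ρ' i) = i := ρ'.symm_apply_apply i
        have e2 : F'.ρ.symm (ρ' j) = j := ρ'.symm_apply_apply j
        rw [e1, e2] at h3
        exact h3.2.2
      · -- j constant
        obtain ⟨hjc, hjpm⟩ := hconst' j hjd hjA
        have hxj : x j = w₀ j := hjc x hx2
        by_cases hbv : b * w₀ j = -1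
        · rw [hxj, hbv]
          have hxb := hxcube.1 i hid
          rcases ha with h | h <;> rw [h] <;> [linarith [hxb.1]; linarith [hxb.2]]
        · -- then b * w₀ j = 1, forcing i to be constant on W : contradiction
          have hbv1 : b * w₀ j = 1 := by
            rcases hb with h | h <;> rcases hjpm with h' | h' <;>
              rw [h, h'] at hbv ⊢ <;> norm_num at hbv <;> norm_num
          exfalso
          apply hA'A₁ i hiA
          have hforced : ∀ y ∈ W, y i = a := by
            intro y hy
            have h4 := (hWS hy _ hT).2
            have hyj : y j = w₀ j := hjc y (hWface' hy)
            rw [hyj] at h4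
            have h5 : (1:ℝ) ≤ a * y i := by
              calc (1:ℝ) = b * w₀ j := hbv1.symm
                _ ≤ a * y i := h4
            have hyb := (hWcube hy).1 i hid
            rcases ha with h | h
            · rw [h] at h5 ⊢; linarith [hyb.2]
            · rw [h] at h5 ⊢; linarith [hyb.1]
          refine ⟨hA'sub hiA, ?_⟩
          rcases ha with h | h
          · left; intro y hy; rw [hforced y hy, h]
          · right; intro y hy; rw [hforced y hy, h]
    · -- i constant
      obtain ⟨hic, hipm⟩ := hconst' i hid hiA
      have hxi : x i = w₀ i := hic x hx2
      by_cases hav : a * w₀ i = 1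
      · rw [hxi, hav]
        by_cases hjA : j ∈ A'
        · have hxb := hxcube.1 j hjd
          rcases hb with h | h <;> rw [h] <;> [linarith [hxb.2]; linarith [hxb.1]]
        · have hxj : x j = w₀ j := (hconst' j hjd hjA).1 x hx2
          have h4 := (hWS hw₀ _ hT).2
          have h5 : a * w₀ i = 1 := hav
          rw [hxj]
          calc b * w₀ j ≤ a * w₀ i := h4
            _ = 1 := h5
      · -- a * w₀ i = -1 : forces j constant = -b on W, contradiction with j free;
        -- or if j is constant the inequality holds at w₀
        have hav1 : a * w₀ i = -1 := by
          rcases ha with h | h <;> rcases hipm with h' | h' <;>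
            rw [h, h'] at hav ⊢ <;> norm_num at hav <;> norm_num
        by_cases hjA : j ∈ A'
        · exfalso
          apply hA'A₁ j hjA
          have hforced : ∀ y ∈ W, y j = -b := by
            intro y hy
            have h4 := (hWS hy _ hT).2
            have hyi : y i = w₀ i := hic y (hWface' hy)
            rw [hyi, hav1] at h4
            have hyb := (hWcube hy).1 j hjd
            rcases hb with h | h
            · rw [h] at h4 ⊢; linarith [hyb.1]
            · rw [h] at h4 ⊢; linarith [hyb.2]
          refine ⟨hA'sub hjA, ?_⟩
          rcases hb with h | h
          · right; intro y hy; simp [hforced y hy, h]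
          · left; intro y hy; simp [hforced y hy, h]
        · have hxj : x j = w₀ j := (hconst' j hjd hjA).1 x hx2
          have h4 := (hWS hw₀ _ hT).2
          rw [hxi, hxj]
          exact h4
/-! ### Transport to a fixed normalizing map, and the main theorem -/

lemma FaceData.M_image_face {n d e : ℕ} (F : FaceData n d e) :
    F.M '' F.face = IcubeD n e := by
  have hbij := F.M_conf.bijective
  rw [← F.M_preimage_cube, Set.image_preimage_eq _ hbij.2]

lemma koCube_char {n d : ℕ} (hd : 1 ≤ d) (hdn : d ≤ n) {C : Set (E n)}
    {L₀ : E n → E n} (hL₀ : ConfAffine n L₀) (hL₀C : L₀ '' C = IcubeD n d)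
    {K : Set (E n)} :
    K ∈ KoCube n d C ↔ ∃ H₀ ∈ KoD n d, K = L₀ ⁻¹' H₀ := by
  constructor
  · rintro (⟨hd0, rfl⟩ | ⟨-, L, hL, hLC, H, hH, rfl⟩)
    · omega
    · obtain ⟨g, ρ, η, hbij, hXpre, hsp, hpre⟩ :=
        exists_sp_conj hd hdn hL₀ hL hL₀C hLC
      exact ⟨g ⁻¹' H, sp_KoD hsp hXpre hH, hpre H⟩
  · rintro ⟨H₀, hH₀, rfl⟩
    exact Or.inr ⟨hd, L₀, hL₀, hL₀C, H₀, hH₀, rfl⟩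

lemma face_char {n d : ℕ} (hd : 1 ≤ d) (hdn : d ≤ n) {C : Set (E n)}
    {L₀ : E n → E n} (hL₀ : ConfAffine n L₀) (hL₀C : L₀ '' C = IcubeD n d)
    {c : Set (E n)} {e : ℕ} :
    FaceOfCubeDim n d C c e ↔ ∃ f, IsFaceD n d f e ∧ c = L₀ ⁻¹' f := by
  constructor
  · rintro ⟨L, hL, hLC, f, hf, rfl⟩
    obtain ⟨g, ρ, η, hbij, hXpre, hsp, hpre⟩ :=
      exists_sp_conj hd hdn hL₀ hL hL₀C hLC
    exact ⟨g ⁻¹' f, sp_face hsp hXpre hf, hpre f⟩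
  · rintro ⟨f, hf, rfl⟩
    exact ⟨L₀, hL₀, hL₀C, f, hf, rfl⟩

lemma cellBd_char {n d : ℕ} (hd : 1 ≤ d) (hdn : d ≤ n) {C : Set (E n)}
    {L₀ : E n → E n} (hL₀ : ConfAffine n L₀) (hL₀C : L₀ '' C = IcubeD n d) :
    cellBd n d C = L₀ ⁻¹' BdD n d := by
  ext x
  simp only [cellBd, mem_sUnion, mem_setOf_eq, mem_preimage]
  constructor
  · rintro ⟨c, ⟨e, hed, hface⟩, hxc⟩
    obtain ⟨f, hf, rfl⟩ := (face_char hd hdn hL₀ hL₀C).1 hface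
    exact isFace_subset_BdD hf hed hdn hxc
  · rintro ⟨hxc, i₀, hi₀d, hi₀pm⟩
    have hs : (L₀ x) i₀ = 1 ∨ (L₀ x) i₀ = -1 := hi₀pm
    refine ⟨L₀ ⁻¹' FacetD n d i₀ (L₀ x i₀), ⟨d - 1, by omega, ?_⟩, ?_⟩
    · exact ⟨L₀, hL₀, hL₀C, FacetD n d i₀ (L₀ x i₀), facet_isFace hi₀d hs hdn, rfl⟩
    · exact ⟨hxc, rfl⟩

lemma koCube_face_char {n d e : ℕ} (he : 1 ≤ e) (hdn : d ≤ n) {C : Set (E n)}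
    {L₀ : E n → E n} (hL₀ : ConfAffine n L₀) (hL₀C : L₀ '' C = IcubeD n d)
    (F : FaceData n d e) {K : Set (E n)} :
    K ∈ KoCube n e (L₀ ⁻¹' F.face) ↔ ∃ H' ∈ KoD n e, K = L₀ ⁻¹' (F.M ⁻¹' H') := by
  have hML : ConfAffine n (F.M ∘ L₀) := F.M_conf.comp hL₀
  have hMLc : (F.M ∘ L₀) '' (L₀ ⁻¹' F.face) = IcubeD n e := by
    rw [Set.image_comp, Set.image_preimage_eq _ hL₀.bijective.2, F.M_image_face]
  constructor
  · intro hK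
    obtain ⟨H', hH', rfl⟩ := (koCube_char he F.hen hML hMLc).1 hK
    exact ⟨H', hH', by rw [Set.preimage_comp]⟩
  · rintro ⟨H', hH', rfl⟩
    refine (koCube_char he F.hen hML hMLc).2 ⟨H', hH', by rw [Set.preimage_comp]⟩

lemma HfamD_zero {n : ℕ} : HfamD n 0 = ∅ := by
  ext X
  simp only [HfamD, mem_setOf_eq, mem_empty_iff_false, iff_false]
  rintro ⟨i, j, hi, -⟩
  omega

lemma fund_zero_empty {n : ℕ} {S : Set (Set (E n))} (hS : IsFundSubsetD n 0 S) :
    S = ∅ := by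
  rw [← Set.subset_empty_iff, ← HfamD_zero]
  exact hS.1

lemma fund_empty_zero (n : ℕ) : IsFundSubsetD n 0 (∅ : Set (Set (E n))) := by
  constructor
  · exact empty_subset _
  · intro i j hi; omega

/-- Direction A → B : any nonempty `H ∩ f` is a boundary cell. -/
lemma AtoB {n d : ℕ} (hd : 1 ≤ d) (hdn : d ≤ n) {C : Set (E n)}
    {L₀ : E n → E n} (hL₀ : ConfAffine n L₀) (hL₀C : L₀ '' C = IcubeD n d)
    {H f' : Set (E n)} {e : ℕ} (hH : H ∈ KoCube n d C)
    (hface : FaceOfCubeDim n d C f' e) (hed : e < d)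
    (hne : (H ∩ f').Nonempty) : H ∩ f' ∈ KcalBdCube n d C := by
  obtain ⟨H₀, hH₀, rfl⟩ := (koCube_char hd hdn hL₀ hL₀C).1 hH
  obtain ⟨S, hS, rfl⟩ := hH₀
  obtain ⟨f, hf, rfl⟩ := (face_char hd hdn hL₀ hL₀C).1 hface
  obtain ⟨F, rfl⟩ := exists_faceData hf
  have hint : L₀ ⁻¹' ⋂₀ S ∩ L₀ ⁻¹' F.face = L₀ ⁻¹' (⋂₀ S ∩ F.face) := by
    rw [Set.preimage_inter]
  have hWne : (⋂₀ S ∩ F.face).Nonempty := by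
    obtain ⟨x, hx⟩ := hne
    rw [hint] at hx
    exact ⟨L₀ x, hx⟩
  obtain ⟨e', F', S'', he'e, hfund'', heq⟩ := core2 F hdn hS hWne
  refine ⟨L₀ ⁻¹' F'.face, e', ?_, by omega, ?_⟩
  · exact ⟨L₀, hL₀, hL₀C, F'.face, F'.isFace, rfl⟩
  · rw [hint, heq]
    rcases Nat.eq_zero_or_pos e' with rfl | he'1
    · left
      refine ⟨rfl, ?_⟩
      have hS''e : S'' = ∅ := fund_zero_empty hfund''
      rw [hS''e]
      simp
    · right
      refine ⟨he'1, F'.M ∘ L₀, F'.M_conf.comp hL₀, ?_, ⋂₀ S'', ⟨S'', hfund'', rfl⟩, ?_⟩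
      · rw [Set.image_comp, Set.image_preimage_eq _ hL₀.bijective.2, F'.M_image_face]
      · have hsub : F'.M ⁻¹' (⋂₀ S'') ⊆ F'.face := by
          rw [← F'.M_preimage_cube]
          exact Set.preimage_mono (sInter_subset_IcubeD hfund'' he'1 F'.hen)
        rw [Set.inter_eq_self_of_subset_left hsub, Set.preimage_comp]

/-- Direction B → A : every boundary cell arises in all three ways. -/
lemma BtoA {n d : ℕ} (hd : 1 ≤ d) (hdn : d ≤ n) {C : Set (E n)}
    {L₀ : E n → E n} (hL₀ : ConfAffine n L₀) (hL₀C : L₀ '' C = IcubeD n d)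
    {K : Set (E n)} (hK : K ∈ KcalBdCube n d C) :
    ∃ H ∈ KoCube n d C, K.Nonempty ∧ K = H ∩ cellBd n d C ∧
      (∃ Fc, FaceOfCubeDim n d C Fc (d - 1) ∧ K = H ∩ Fc) := by
  obtain ⟨c, e, hface, hed, hKc⟩ := hK
  obtain ⟨f, hf, rfl⟩ := (face_char hd hdn hL₀ hL₀C).1 hface
  obtain ⟨F, rfl⟩ := exists_faceData hf
  -- represent K as a cell on the face
  have hrep : ∃ S', IsFundSubsetD n e S' ∧ K = L₀ ⁻¹' (cellW F S') := by
    rcases Nat.eq_zero_or_pos e with rfl | he1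
    · refine ⟨∅, fund_empty_zero n, ?_⟩
      have hKeq : K = L₀ ⁻¹' F.face := by
        rcases hKc with ⟨-, rfl⟩ | ⟨habs, -⟩
        · rfl
        · omega
      rw [hKeq]
      unfold cellW
      simp
    · obtain ⟨H', hH', rfl⟩ := (koCube_face_char he1 hdn hL₀ hL₀C F).1 hKc
      obtain ⟨S', hS', rfl⟩ := hH'
      refine ⟨S', hS', ?_⟩
      unfold cellW
      have hsub : F.M ⁻¹' (⋂₀ S') ⊆ F.face := by
        rw [← F.M_preimage_cube]
        exact Set.preimage_mono (sInter_subset_IcubeD hS' he1 F.hen)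
      rw [Set.inter_eq_self_of_subset_left hsub]
  obtain ⟨S', hS', rfl⟩ := hrep
  obtain ⟨hfund, hfaceeq, hbdeq, ⟨p, hpd, hzp, hfaceteq⟩, hzmem⟩ := core1 F hed hdn hS'
  refine ⟨L₀ ⁻¹' (⋂₀ SvOf d (cellW F S')), ?_, ?_, ?_, ?_⟩
  · exact (koCube_char hd hdn hL₀ hL₀C).2 ⟨_, ⟨_, hfund, rfl⟩, rfl⟩
  · obtain ⟨x, hx⟩ := hL₀.bijective.2 F.z
    exact ⟨x, by rw [mem_preimage, hx]; exact hzmem⟩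
  · rw [cellBd_char hd hdn hL₀ hL₀C, ← Set.preimage_inter, hbdeq]
  · refine ⟨L₀ ⁻¹' FacetD n d p (F.z p),
      ⟨L₀, hL₀, hL₀C, _, facet_isFace hpd hzp hdn, rfl⟩, ?_⟩
    rw [← Set.preimage_inter, hfaceteq]
/-- The three collections `{H ∩ ∂_∘C}`, `{H ∩ F : F facet}`, `{H ∩ f : f proper face}`
(each with `H ∈ K°_d(C)` and nonempty intersection) all equal `∂K_d(C)`. -/
theorem stmt8 (n d : ℕ) (hd : 1 ≤ d) (hdn : d ≤ n) (C : Set (E n))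
    (hC : IsCube n d C) :
    {K | ∃ H ∈ KoCube n d C, (H ∩ cellBd n d C).Nonempty ∧ K = H ∩ cellBd n d C}
      = KcalBdCube n d C ∧
    {K | ∃ H ∈ KoCube n d C, ∃ F, FaceOfCubeDim n d C F (d - 1) ∧
        (H ∩ F).Nonempty ∧ K = H ∩ F} = KcalBdCube n d C ∧
    {K | ∃ H ∈ KoCube n d C, ∃ f e, FaceOfCubeDim n d C f e ∧ e < d ∧
        (H ∩ f).Nonempty ∧ K = H ∩ f} = KcalBdCube n d C := by
  obtain ⟨L₀, hL₀, hL₀C⟩ := hC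
  refine ⟨?_, ?_, ?_⟩
  · apply Set.Subset.antisymm
    · rintro K ⟨H, hH, hne, rfl⟩
      obtain ⟨H₀, hH₀, rfl⟩ := (koCube_char hd hdn hL₀ hL₀C).1 hH
      obtain ⟨S, hS, rfl⟩ := hH₀
      obtain ⟨k, s, hkd, hspm, hbdfacet⟩ := KoD_bd_eq_facet hd hdn hS
      have heq : L₀ ⁻¹' ⋂₀ S ∩ cellBd n d C
          = L₀ ⁻¹' ⋂₀ S ∩ L₀ ⁻¹' (FacetD n d k s) := by
        rw [cellBd_char hd hdn hL₀ hL₀C, ← Set.preimage_inter, hbdfacet,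
          Set.preimage_inter]
      rw [heq] at hne ⊢
      refine AtoB hd hdn hL₀ hL₀C (e := d - 1)
        ((koCube_char hd hdn hL₀ hL₀C).2 ⟨_, ⟨S, hS, rfl⟩, rfl⟩)
        ((face_char hd hdn hL₀ hL₀C).2 ⟨_, facet_isFace hkd hspm hdn, rfl⟩)
        (by omega) hne
    · intro K hK
      obtain ⟨H, hH, hne, hKbd, -⟩ := BtoA hd hdn hL₀ hL₀C hK
      exact ⟨H, hH, by rw [← hKbd]; exact hne, hKbd⟩
  · apply Set.Subset.antisymm
    · rintro K ⟨H, hH, Fc, hFc, hne, rfl⟩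
      exact AtoB hd hdn hL₀ hL₀C hH hFc (by omega) hne
    · intro K hK
      obtain ⟨H, hH, hne, -, Fc, hFc, hKf⟩ := BtoA hd hdn hL₀ hL₀C hK
      exact ⟨H, hH, Fc, hFc, by rw [← hKf]; exact hne, hKf⟩
  · apply Set.Subset.antisymm
    · rintro K ⟨H, hH, f, e, hface, hed, hne, rfl⟩
      exact AtoB hd hdn hL₀ hL₀C hH hface hed hne
    · intro K hK
      obtain ⟨H, hH, hne, -, Fc, hFc, hKf⟩ := BtoA hd hdn hL₀ hL₀C hK
      exact ⟨H, hH, Fc, d - 1, hFc, by omega, by rw [← hKf]; exact hne, hKf⟩
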